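/- arXiv:2311.11320 — 4 statements merged into one kernel-verified Lean document; each statement's English description precedes it below -/
import Mathlib

section
/- Let M₁, ..., M_D be square complex matrices with M_μ of size N_μ, and define the 'Kronecker sum'-type operator 𝒟 = Σ_μ (1_{N_D} ⊗ ... ⊗ M_μ ⊗ ... ⊗ 1_{N_1}) ⊗ γ_μ, where γ_1, ..., γ_D are matrices satisfying γ_μγ_ν + γ_νγ_μ = 2δ_{μν}·1. If each M_μ is unitarily diagonalizable with eigenvalues iλ_μ^{(m_μ)} (λ real), then 𝒟 has a nonzero kernel vector exactly when there exists a multi-index (m_1,...,m_D) with λ_μ^{(m_μ)} = 0 for all μ, and dim ker 𝒟 = rank(γ) · #{multi-indices with all λ_μ^{(m_μ)} = 0}. -/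
open Matrix Kronecker

private lemma sum_pi_prod {D : ℕ} {N : Fin D → ℕ} (f : ∀ ν : Fin D, Fin (N ν) → ℂ) :
    ∑ x : ∀ ν, Fin (N ν), ∏ ν, f ν (x ν) = ∏ ν, ∑ j, f ν j := by
  rw [Finset.prod_univ_sum (fun ν => (Finset.univ : Finset (Fin (N ν)))) f,
    Fintype.piFinset_univ]

private lemma conj_entry {n : Type*} [Fintype n] (V B : Matrix n n ℂ) (i j : n) :
    (Vᴴ * B * V) i j = ∑ x, ∑ y, star (V x i) * B x y * V y j := by
  simp only [Matrix.mul_apply, Matrix.conjTranspose_apply, Finset.sum_mul]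
  rw [Finset.sum_comm]

private lemma prod_delta {D : ℕ} {N : Fin D → ℕ} (p q : ∀ ν, Fin (N ν)) :
    ∏ ν, (if p ν = q ν then (1:ℂ) else 0) = if p = q then 1 else 0 := by
  by_cases h : p = q
  · subst h; simp
  · simp only [h, if_false]
    obtain ⟨ν, hν⟩ := Function.ne_iff.mp h
    exact Finset.prod_eq_zero (Finset.mem_univ ν) (by simp [hν])

private lemma kron_conjT {l m n p : Type*} (A : Matrix l m ℂ) (B : Matrix n p ℂ) :
    (A ⊗ₖ B)ᴴ = Aᴴ ⊗ₖ Bᴴ := by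
  ext i j
  simp [Matrix.conjTranspose_apply, Matrix.kroneckerMap_apply, mul_comm]

section P

variable {D : ℕ} {N : Fin D → ℕ} (U M : ∀ μ, Matrix (Fin (N μ)) (Fin (N μ)) ℂ)

private lemma wp_conj (B : ∀ ν, Matrix (Fin (N ν)) (Fin (N ν)) ℂ)
    (m m' : ∀ ν, Fin (N ν)) :
    ((Matrix.of fun p q : ∀ μ, Fin (N μ) => ∏ μ, U μ (p μ) (q μ))ᴴ *
      (Matrix.of fun x y : ∀ μ, Fin (N μ) => ∏ ν, B ν (x ν) (y ν)) *
      (Matrix.of fun p q : ∀ μ, Fin (N μ) => ∏ μ, U μ (p μ) (q μ))) m m' =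
    ∏ ν, ((U ν)ᴴ * B ν * U ν) (m ν) (m' ν) := by
  rw [conj_entry]
  have step : ∀ x y : ∀ μ, Fin (N μ),
      star ((Matrix.of fun p q : ∀ μ, Fin (N μ) => ∏ μ, U μ (p μ) (q μ)) x m) *
        (Matrix.of fun x y : ∀ μ, Fin (N μ) => ∏ ν, B ν (x ν) (y ν)) x y *
        (Matrix.of fun p q : ∀ μ, Fin (N μ) => ∏ μ, U μ (p μ) (q μ)) y m' =
      ∏ ν, (star (U ν (x ν) (m ν)) * B ν (x ν) (y ν) * U ν (y ν) (m' ν)) := by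
    intro x y
    simp only [Matrix.of_apply, star_prod, ← Finset.prod_mul_distrib]
  simp only [step]
  have inner : ∀ x : ∀ μ, Fin (N μ),
      (∑ y : ∀ μ, Fin (N μ), ∏ ν, (star (U ν (x ν) (m ν)) * B ν (x ν) (y ν) * U ν (y ν) (m' ν)))
        = ∏ ν, ∑ j, star (U ν (x ν) (m ν)) * B ν (x ν) j * U ν j (m' ν) := fun x =>
    sum_pi_prod (fun ν j => star (U ν (x ν) (m ν)) * B ν (x ν) j * U ν j (m' ν))
  simp only [inner]
  rw [sum_pi_prod fun ν i => ∑ j, star (U ν i (m ν)) * B ν i j * U ν j (m' ν)]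
  exact Finset.prod_congr rfl fun ν _ => (conj_entry (U ν) (B ν) (m ν) (m' ν)).symm

private lemma wp_unitary (hU : ∀ μ, (U μ)ᴴ * U μ = 1) :
    (Matrix.of fun p q : ∀ μ, Fin (N μ) => ∏ μ, U μ (p μ) (q μ))ᴴ *
      (Matrix.of fun p q : ∀ μ, Fin (N μ) => ∏ μ, U μ (p μ) (q μ)) = 1 := by
  have h1 : (Matrix.of fun x y : ∀ μ, Fin (N μ) =>
      ∏ ν, (1 : Matrix (Fin (N ν)) (Fin (N ν)) ℂ) (x ν) (y ν)) = 1 := by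
    ext x y
    simp only [Matrix.of_apply, Matrix.one_apply]
    exact prod_delta x y
  have h2 := fun m m' => wp_conj U (fun ν => (1 : Matrix (Fin (N ν)) (Fin (N ν)) ℂ)) m m'
  rw [h1] at h2
  simp only [Matrix.mul_one] at h2
  ext m m'
  rw [h2 m m']
  simp only [hU, Matrix.one_apply]
  exact prod_delta m m'

private lemma mp_eq_prod (μ : Fin D) :
    (Matrix.of fun x y : ∀ ν, Fin (N ν) =>
        M μ (x μ) (y μ) * ∏ ν ∈ Finset.univ.erase μ, (if x ν = y ν then (1:ℂ) else 0)) =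
    Matrix.of fun x y : ∀ ν, Fin (N ν) =>
        ∏ ν, (Function.update (fun ν => (1 : Matrix (Fin (N ν)) (Fin (N ν)) ℂ)) μ (M μ)) ν (x ν) (y ν) := by
  ext x y
  simp only [Matrix.of_apply]
  rw [← Finset.mul_prod_erase Finset.univ _ (Finset.mem_univ μ)]
  congr 1
  · rw [Function.update_self]
  · refine Finset.prod_congr rfl fun ν hν => ?_
    rw [Function.update_of_ne (Finset.ne_of_mem_erase hν)]
    simp [Matrix.one_apply]

private lemma wp_conj_M (hU : ∀ μ, (U μ)ᴴ * U μ = 1)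
    (lam : ∀ μ, Fin (N μ) → ℝ)
    (hdiag : ∀ μ, (U μ)ᴴ * M μ * U μ =
      Matrix.diagonal (fun m => Complex.I * (lam μ m : ℝ))) (μ : Fin D) :
    (Matrix.of fun p q : ∀ μ, Fin (N μ) => ∏ μ, U μ (p μ) (q μ))ᴴ *
      (Matrix.of fun x y : ∀ ν, Fin (N ν) =>
        M μ (x μ) (y μ) * ∏ ν ∈ Finset.univ.erase μ, (if x ν = y ν then (1:ℂ) else 0)) *
      (Matrix.of fun p q : ∀ μ, Fin (N μ) => ∏ μ, U μ (p μ) (q μ)) =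
    Matrix.diagonal (fun m : ∀ ν, Fin (N ν) => Complex.I * (lam μ (m μ) : ℝ)) := by
  rw [mp_eq_prod M μ]
  ext m m'
  rw [wp_conj U _ m m']
  set F := Function.update (fun ν => (1 : Matrix (Fin (N ν)) (Fin (N ν)) ℂ)) μ (M μ) with hF
  have hent : ∀ ν, ((U ν)ᴴ * F ν * U ν) (m ν) (m' ν) =
      if ν = μ then (if m μ = m' μ then Complex.I * (lam μ (m μ) : ℝ) else 0)
      else (if m ν = m' ν then (1:ℂ) else 0) := by
    intro ν
    by_cases hν : ν = μ
    · subst hν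
      rw [hF, Function.update_self, hdiag]
      simp [Matrix.diagonal_apply, eq_comm]
    · rw [hF, Function.update_of_ne hν, Matrix.mul_one, hU, if_neg hν, Matrix.one_apply]
  simp only [hent]
  rw [← Finset.mul_prod_erase Finset.univ _ (Finset.mem_univ μ), if_pos rfl]
  have herase : ∏ ν ∈ Finset.univ.erase μ,
      (if ν = μ then (if m μ = m' μ then Complex.I * (lam μ (m μ) : ℝ) else 0)
      else (if m ν = m' ν then (1:ℂ) else 0)) =
      ∏ ν ∈ Finset.univ.erase μ, (if m ν = m' ν then (1:ℂ) else 0) :=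
    Finset.prod_congr rfl fun ν hν => by rw [if_neg (Finset.ne_of_mem_erase hν)]
  rw [herase, Matrix.diagonal_apply]
  by_cases h : m = m'
  · subst h
    simp
  · rw [if_neg h]
    obtain ⟨ν₀, hν₀⟩ := Function.ne_iff.mp h
    by_cases hμ : ν₀ = μ
    · subst hμ
      rw [if_neg hν₀, zero_mul]
    · rw [Finset.prod_eq_zero (Finset.mem_erase.mpr ⟨hμ, Finset.mem_univ ν₀⟩)
        (show (if m ν₀ = m' ν₀ then (1:ℂ) else 0) = 0 from if_neg hν₀),
        mul_zero]

end P

private lemma clifford_sq {r D : ℕ} {γ : Fin D → Matrix (Fin r) (Fin r) ℂ}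
    (hγ : ∀ μ ν, γ μ * γ ν + γ ν * γ μ =
      if μ = ν then (2 : ℂ) • (1 : Matrix (Fin r) (Fin r) ℂ) else 0)
    (c : Fin D → ℂ) :
    (∑ μ, c μ • γ μ) * (∑ μ, c μ • γ μ) = (∑ μ, c μ * c μ) • (1 : Matrix (Fin r) (Fin r) ℂ) := by
  have e1 : (∑ μ, c μ • γ μ) * (∑ μ, c μ • γ μ)
      = ∑ μ, ∑ ν, (c μ * c ν) • (γ μ * γ ν) := by
    rw [Finset.sum_mul]
    exact Finset.sum_congr rfl fun μ _ => by
      rw [Finset.mul_sum]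
      exact Finset.sum_congr rfl fun ν _ => by
        rw [smul_mul_assoc, mul_smul_comm, smul_smul]
  have e2 : (∑ μ, ∑ ν, (c μ * c ν) • (γ μ * γ ν))
      = ∑ μ, ∑ ν, (c μ * c ν) • (γ ν * γ μ) := by
    rw [Finset.sum_comm]
    exact Finset.sum_congr rfl fun μ _ => Finset.sum_congr rfl fun ν _ => by
      rw [mul_comm (c ν) (c μ)]
  have key : (2:ℂ) • ((∑ μ, c μ • γ μ) * (∑ μ, c μ • γ μ))
      = (2:ℂ) • ((∑ μ, c μ * c μ) • (1 : Matrix (Fin r) (Fin r) ℂ)) := by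
    rw [two_smul]
    nth_rewrite 1 [e1]
    nth_rewrite 1 [e1]
    nth_rewrite 2 [e2]
    rw [← Finset.sum_add_distrib]
    have h3 : ∀ μ : Fin D, ((∑ ν, (c μ * c ν) • (γ μ * γ ν)) + ∑ ν, (c μ * c ν) • (γ ν * γ μ))
        = (2 * (c μ * c μ)) • (1 : Matrix (Fin r) (Fin r) ℂ) := by
      intro μ
      rw [← Finset.sum_add_distrib]
      have h4 : ∀ ν : Fin D, ((c μ * c ν) • (γ μ * γ ν) + (c μ * c ν) • (γ ν * γ μ))
          = if μ = ν then (2 * (c μ * c μ)) • (1 : Matrix (Fin r) (Fin r) ℂ) else 0 := by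
        intro ν
        rw [← smul_add, hγ μ ν]
        by_cases h : μ = ν
        · subst h; rw [if_pos rfl, if_pos rfl, smul_smul, mul_comm]
        · rw [if_neg h, if_neg h, smul_zero]
      simp only [h4]
      rw [Finset.sum_ite_eq Finset.univ μ fun _ => (2 * (c μ * c μ)) • (1 : Matrix (Fin r) (Fin r) ℂ),
        if_pos (Finset.mem_univ μ)]
    simp only [h3]
    rw [smul_smul, ← Finset.sum_smul, Finset.mul_sum]
  exact smul_right_injective (Matrix (Fin r) (Fin r) ℂ) two_ne_zero key

private lemma isUnit_of_sq {r : ℕ} (A : Matrix (Fin r) (Fin r) ℂ) (s : ℂ) (hs : s ≠ 0)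
    (h : A * A = s • 1) : IsUnit A := by
  have h1 : A * (s⁻¹ • A) = 1 := by
    rw [mul_smul_comm, h, smul_smul, inv_mul_cancel₀ hs, one_smul]
  have h2 : (s⁻¹ • A) * A = 1 := by
    rw [smul_mul_assoc, h, smul_smul, inv_mul_cancel₀ hs, one_smul]
  have : Invertible A := ⟨s⁻¹ • A, h2, h1⟩
  exact isUnit_of_invertible A

private lemma mulVec_eq_zero_of_isUnit {n : Type*} [Fintype n] [DecidableEq n]
    {B : Matrix n n ℂ} (hB : IsUnit B) {x : n → ℂ} (hx : B.mulVec x = 0) : x = 0 := by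
  obtain ⟨u, rfl⟩ := hB
  have h := congrArg ((↑u⁻¹ : Matrix n n ℂ).mulVec) hx
  rwa [Matrix.mulVec_mulVec, Units.inv_mul, Matrix.one_mulVec, Matrix.mulVec_zero] at h

open Matrix in
theorem kroneckerSum_dirac_ker_dim
    (D : ℕ) (hD : 1 ≤ D) (N : Fin D → ℕ) (r : ℕ) (hr : 1 ≤ r)
    (γ : Fin D → Matrix (Fin r) (Fin r) ℂ)
    (hγ : ∀ μ ν, γ μ * γ ν + γ ν * γ μ = if μ = ν then (2 : ℂ) • (1 : Matrix (Fin r) (Fin r) ℂ) else 0)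
    (M : ∀ μ, Matrix (Fin (N μ)) (Fin (N μ)) ℂ)
    (hskew : ∀ μ, (M μ)ᴴ = -(M μ))
    (U : ∀ μ, Matrix (Fin (N μ)) (Fin (N μ)) ℂ)
    (hU : ∀ μ, U μ ∈ Matrix.unitaryGroup (Fin (N μ)) ℂ)
    (lam : ∀ μ, Fin (N μ) → ℝ)
    (hdiag : ∀ μ, (U μ)ᴴ * M μ * U μ =
      Matrix.diagonal (fun m => Complex.I * (lam μ m : ℝ))) :
    let Dop : Matrix ((∀ μ, Fin (N μ)) × Fin r) ((∀ μ, Fin (N μ)) × Fin r) ℂ :=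
      Matrix.of fun p q => ∑ μ, (M μ (p.1 μ) (q.1 μ)) * (γ μ p.2 q.2) *
        ∏ ν ∈ Finset.univ.erase μ, (if p.1 ν = q.1 ν then (1 : ℂ) else 0)
    (Module.finrank ℂ (LinearMap.ker (Matrix.toLin' Dop)) =
        r * Fintype.card {m : ∀ μ, Fin (N μ) // ∀ μ, lam μ (m μ) = 0}) ∧
    ((∃ v : (∀ μ, Fin (N μ)) × Fin r → ℂ, v ≠ 0 ∧ Dop.mulVec v = 0) ↔
        ∃ m : ∀ μ, Fin (N μ), ∀ μ, lam μ (m μ) = 0) := by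
  intro Dop
  classical
  -- basic unitarity
  have hUU : ∀ μ, (U μ)ᴴ * U μ = 1 := fun μ => by
    have h := Matrix.mem_unitaryGroup_iff'.mp (hU μ)
    rwa [Matrix.star_eq_conjTranspose] at h
  set Wp : Matrix (∀ μ, Fin (N μ)) (∀ μ, Fin (N μ)) ℂ :=
    Matrix.of fun p q : ∀ μ, Fin (N μ) => ∏ μ, U μ (p μ) (q μ) with hWpdef
  have hWpU : Wpᴴ * Wp = 1 := wp_unitary U hUU
  set W : Matrix ((∀ μ, Fin (N μ)) × Fin r) ((∀ μ, Fin (N μ)) × Fin r) ℂ :=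
    Wp ⊗ₖ (1 : Matrix (Fin r) (Fin r) ℂ) with hWdef
  have hW : Wᴴ * W = 1 := by
    rw [hWdef, kron_conjT, ← Matrix.mul_kronecker_mul, hWpU, Matrix.conjTranspose_one,
      Matrix.mul_one, Matrix.one_kronecker_one]
  have hW' : W * Wᴴ = 1 := mul_eq_one_comm.mp hW
  -- Dop as a Kronecker sum
  have hDopK : Dop = ∑ μ, (Matrix.of fun x y : ∀ ν, Fin (N ν) =>
      M μ (x μ) (y μ) * ∏ ν ∈ Finset.univ.erase μ, (if x ν = y ν then (1:ℂ) else 0)) ⊗ₖ γ μ := by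
    ext p q
    simp only [Dop, Matrix.of_apply, Matrix.sum_apply, Matrix.kroneckerMap_apply]
    exact Finset.sum_congr rfl fun μ _ => by ring
  -- the conjugated matrix
  set A : (∀ μ, Fin (N μ)) → Matrix (Fin r) (Fin r) ℂ :=
    fun m => ∑ μ, (Complex.I * (lam μ (m μ) : ℝ)) • γ μ with hAdef
  set Dd : Matrix ((∀ μ, Fin (N μ)) × Fin r) ((∀ μ, Fin (N μ)) × Fin r) ℂ :=
    Matrix.of fun p q => if p.1 = q.1 then A p.1 p.2 q.2 else 0 with hDddef
  have key : Wᴴ * Dop * W = Dd := by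
    rw [hDopK, hWdef, Finset.mul_sum, Finset.sum_mul]
    have hterm : ∀ μ : Fin D, (Wp ⊗ₖ (1 : Matrix (Fin r) (Fin r) ℂ))ᴴ *
        ((Matrix.of fun x y : ∀ ν, Fin (N ν) =>
          M μ (x μ) (y μ) * ∏ ν ∈ Finset.univ.erase μ, (if x ν = y ν then (1:ℂ) else 0)) ⊗ₖ γ μ) *
        (Wp ⊗ₖ (1 : Matrix (Fin r) (Fin r) ℂ)) =
        (Matrix.diagonal fun m : ∀ ν, Fin (N ν) => Complex.I * (lam μ (m μ) : ℝ)) ⊗ₖ γ μ := by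
      intro μ
      rw [kron_conjT, Matrix.conjTranspose_one, ← Matrix.mul_kronecker_mul,
        ← Matrix.mul_kronecker_mul, Matrix.one_mul, Matrix.mul_one,
        wp_conj_M U M hUU lam hdiag μ]
    simp only [hterm]
    ext p q
    simp only [Matrix.sum_apply, Matrix.kroneckerMap_apply, Matrix.diagonal_apply, hDddef,
      Matrix.of_apply, hAdef, Matrix.sum_apply, Matrix.smul_apply, smul_eq_mul]
    by_cases h : p.1 = q.1
    · simp [h]
    · simp [h]
  have hDop2 : Dop = W * Dd * Wᴴ := by
    rw [← key]
    calc Dop = (W * Wᴴ) * Dop * (W * Wᴴ) := by rw [hW', Matrix.one_mul, Matrix.mul_one]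
      _ = W * (Wᴴ * Dop * W) * Wᴴ := by simp only [Matrix.mul_assoc]
  -- transfer the kernel through the unitary
  have hkerW : LinearMap.ker (Matrix.toLin' W) = ⊥ :=
    LinearMap.ker_eq_bot.mpr (Matrix.toLin'OfInv hW hW').injective
  set eW' : ((∀ μ, Fin (N μ)) × Fin r → ℂ) ≃ₗ[ℂ] ((∀ μ, Fin (N μ)) × Fin r → ℂ) :=
    Matrix.toLin'OfInv hW' hW with heW'
  have heW'coe : (eW' : ((∀ μ, Fin (N μ)) × Fin r → ℂ) →ₗ[ℂ] ((∀ μ, Fin (N μ)) × Fin r → ℂ))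
      = Matrix.toLin' Wᴴ := rfl
  have hkercomap : LinearMap.ker (Matrix.toLin' Dop)
      = Submodule.comap (eW' : ((∀ μ, Fin (N μ)) × Fin r → ℂ) →ₗ[ℂ] ((∀ μ, Fin (N μ)) × Fin r → ℂ))
          (LinearMap.ker (Matrix.toLin' Dd)) := by
    rw [heW'coe, hDop2, Matrix.toLin'_mul, Matrix.toLin'_mul, LinearMap.ker_comp,
      LinearMap.ker_comp, hkerW, Submodule.comap_bot]
  have hfr1 : Module.finrank ℂ (LinearMap.ker (Matrix.toLin' Dop))
      = Module.finrank ℂ (LinearMap.ker (Matrix.toLin' Dd)) := by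
    rw [hkercomap, Submodule.comap_equiv_eq_map_symm]
    exact LinearEquiv.finrank_map_eq eW'.symm _
  -- properties of the blocks A m
  have hA0 : ∀ m : ∀ μ, Fin (N μ), (∀ μ, lam μ (m μ) = 0) → A m = 0 := by
    intro m hm
    rw [hAdef]
    refine Finset.sum_eq_zero fun μ _ => ?_
    rw [hm μ]
    simp
  have hAunit : ∀ m : ∀ μ, Fin (N μ), ¬(∀ μ, lam μ (m μ) = 0) → IsUnit (A m) := by
    intro m hm
    push_neg at hm
    obtain ⟨μ₀, hμ₀⟩ := hm
    have hsq := clifford_sq hγ (fun μ => Complex.I * (lam μ (m μ) : ℝ))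
    have hc : (∑ μ, (Complex.I * (lam μ (m μ) : ℝ)) * (Complex.I * (lam μ (m μ) : ℝ)))
        = -((∑ μ, lam μ (m μ) ^ 2 : ℝ) : ℂ) := by
      push_cast
      rw [← Finset.sum_neg_distrib]
      refine Finset.sum_congr rfl fun μ _ => ?_
      have : Complex.I * Complex.I = -1 := Complex.I_mul_I
      ring_nf
      rw [Complex.I_sq]
      ring
    have hpos : (0:ℝ) < ∑ μ, lam μ (m μ) ^ 2 := by
      refine Finset.sum_pos' (fun μ _ => sq_nonneg _) ⟨μ₀, Finset.mem_univ μ₀, by positivity⟩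
    have hs : (-((∑ μ, lam μ (m μ) ^ 2 : ℝ) : ℂ)) ≠ 0 := by
      simp only [ne_eq, neg_eq_zero, Complex.ofReal_eq_zero]
      exact ne_of_gt hpos
    exact isUnit_of_sq (A m) _ hs (hsq.trans (by rw [hc]))
  -- kernel characterization for Dd
  have hmv : ∀ (v : (∀ μ, Fin (N μ)) × Fin r → ℂ) (m : ∀ μ, Fin (N μ)) (a : Fin r),
      Dd.mulVec v (m, a) = (A m).mulVec (fun b => v (m, b)) a := by
    intro v m a
    simp only [Matrix.mulVec, dotProduct, hDddef, Matrix.of_apply]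
    rw [Fintype.sum_prod_type]
    have h1 : ∀ q : ∀ μ, Fin (N μ),
        (∑ b : Fin r, (if m = q then A m a b else 0) * v (q, b))
          = if m = q then (∑ b : Fin r, A m a b * v (q, b)) else 0 := by
      intro q
      by_cases h : m = q <;> simp [h]
    simp only [h1]
    rw [Finset.sum_ite_eq Finset.univ m fun q => ∑ b : Fin r, A m a b * v (q, b),
      if_pos (Finset.mem_univ m)]
  have hchar : ∀ v : (∀ μ, Fin (N μ)) × Fin r → ℂ,
      Dd.mulVec v = 0 ↔ ∀ p : ∀ μ, Fin (N μ), ¬(∀ μ, lam μ (p μ) = 0) → ∀ b, v (p, b) = 0 := by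
    intro v
    constructor
    · intro hv p hp b
      have hz : (A p).mulVec (fun b => v (p, b)) = 0 := by
        funext a
        rw [← hmv v p a, hv]
        rfl
      have := mulVec_eq_zero_of_isUnit (hAunit p hp) hz
      exact congrFun this b
    · intro hcond
      funext x
      obtain ⟨m, a⟩ := x
      rw [hmv v m a]
      by_cases h : ∀ μ, lam μ (m μ) = 0
      · rw [hA0 m h]
        simp [Matrix.mulVec]
      · have : (fun b => v (m, b)) = 0 := funext fun b => hcond m h b
        rw [this]
        simp [Matrix.mulVec_zero]
  -- the kernel is equivalent to functions on the zero multi-indices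
  set S := {m : ∀ μ, Fin (N μ) // ∀ μ, lam μ (m μ) = 0} with hSdef
  have hmemker : ∀ v : (∀ μ, Fin (N μ)) × Fin r → ℂ,
      v ∈ LinearMap.ker (Matrix.toLin' Dd) ↔ Dd.mulVec v = 0 := by
    intro v
    rw [LinearMap.mem_ker, Matrix.toLin'_apply]
  set E : (S × Fin r → ℂ) →ₗ[ℂ] ((∀ μ, Fin (N μ)) × Fin r → ℂ) :=
    { toFun := fun w x => if h : ∀ μ, lam μ (x.1 μ) = 0 then w (⟨x.1, h⟩, x.2) else 0
      map_add' := by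
        intro w w'
        funext x
        by_cases h : ∀ μ, lam μ (x.1 μ) = 0 <;> simp [h]
      map_smul' := by
        intro c w
        funext x
        by_cases h : ∀ μ, lam μ (x.1 μ) = 0 <;> simp [h] } with hEdef
  have hEker : ∀ w : S × Fin r → ℂ, E w ∈ LinearMap.ker (Matrix.toLin' Dd) := by
    intro w
    rw [hmemker, hchar]
    intro p hp b
    simp only [hEdef, LinearMap.coe_mk, AddHom.coe_mk]
    rw [dif_neg hp]
  set f : LinearMap.ker (Matrix.toLin' Dd) →ₗ[ℂ] (S × Fin r → ℂ) :=
    { toFun := fun v sb => (v : (∀ μ, Fin (N μ)) × Fin r → ℂ) (sb.1.1, sb.2)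
      map_add' := fun v w => rfl
      map_smul' := fun c v => rfl } with hfdef
  set g : (S × Fin r → ℂ) →ₗ[ℂ] LinearMap.ker (Matrix.toLin' Dd) :=
    LinearMap.codRestrict _ E hEker with hgdef
  have hfg : f.comp g = LinearMap.id := by
    apply LinearMap.ext
    intro w
    funext sb
    simp only [LinearMap.comp_apply, LinearMap.id_apply, hfdef, hgdef, LinearMap.coe_mk,
      AddHom.coe_mk, LinearMap.codRestrict_apply, hEdef]
    rw [dif_pos sb.1.2]
  have hgf : g.comp f = LinearMap.id := by
    apply LinearMap.ext
    intro v
    apply Subtype.ext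
    funext x
    have hvk := (hchar _).mp ((hmemker _).mp v.2)
    simp only [LinearMap.comp_apply, LinearMap.id_apply, hgdef, LinearMap.codRestrict_apply,
      hEdef, hfdef, LinearMap.coe_mk, AddHom.coe_mk]
    by_cases h : ∀ μ, lam μ (x.1 μ) = 0
    · rw [dif_pos h]
    · rw [dif_neg h]
      exact (hvk x.1 h x.2).symm
  have hfr2 : Module.finrank ℂ (LinearMap.ker (Matrix.toLin' Dd))
      = r * Fintype.card S := by
    have he : LinearMap.ker (Matrix.toLin' Dd) ≃ₗ[ℂ] (S × Fin r → ℂ) :=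
      LinearEquiv.ofLinear f g hfg hgf
    rw [he.finrank_eq, Module.finrank_fintype_fun_eq_card, Fintype.card_prod, Fintype.card_fin,
      mul_comm]
  have hfr : Module.finrank ℂ (LinearMap.ker (Matrix.toLin' Dop)) = r * Fintype.card S := by
    rw [hfr1, hfr2]
  refine ⟨hfr, ?_⟩
  -- the existence statement
  have hne : (∃ v : (∀ μ, Fin (N μ)) × Fin r → ℂ, v ≠ 0 ∧ Dop.mulVec v = 0)
      ↔ LinearMap.ker (Matrix.toLin' Dop) ≠ ⊥ := by
    rw [Submodule.ne_bot_iff]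
    constructor
    · rintro ⟨v, hv0, hv⟩
      exact ⟨v, by rw [LinearMap.mem_ker, Matrix.toLin'_apply]; exact hv, hv0⟩
    · rintro ⟨v, hv, hv0⟩
      exact ⟨v, hv0, by rw [LinearMap.mem_ker, Matrix.toLin'_apply] at hv; exact hv⟩
  rw [hne]
  constructor
  · intro hbot
    have : Module.finrank ℂ (LinearMap.ker (Matrix.toLin' Dop)) ≠ 0 := by
      intro h0
      exact hbot (Submodule.finrank_eq_zero.mp h0)
    rw [hfr] at this
    have hcard : Fintype.card S ≠ 0 := fun h => this (by rw [h, mul_zero])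
    obtain ⟨⟨m, hm⟩⟩ := Fintype.card_pos_iff.mp (Nat.pos_of_ne_zero hcard)
    exact ⟨m, hm⟩
  · rintro ⟨m, hm⟩
    intro hbot
    have h0 : Module.finrank ℂ (LinearMap.ker (Matrix.toLin' Dop)) = 0 := by
      rw [hbot]; exact finrank_bot ℂ _
    rw [hfr] at h0
    have hcard : 0 < Fintype.card S := Fintype.card_pos_iff.mpr ⟨⟨m, hm⟩⟩
    have : 0 < r * Fintype.card S := Nat.mul_pos (Nat.lt_of_lt_of_le Nat.zero_lt_one hr) hcard
    omega
end

section
/- Let G be the cartesian product of d cycle digraphs each with an even number of vertices and (D-d) simple directed paths each with an odd number of vertices, and let 𝒟(G) = Σ_μ (A_as)_μ ⊗ γ_μ be the associated naive Dirac operator built from their anti-symmetrized adjacency matrices and gamma matrices satisfying {γ_μ, γ_ν} = 2δ_{μν}. Then dim ker 𝒟(G) = rank(γ) · 2^d. -/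
/-- Anti-symmetrized adjacency matrix of the cycle digraph on `N` vertices. -/
def cycleAsAdj (N : ℕ) : Matrix (Fin N) (Fin N) ℂ :=
  fun j k => if (k : ℕ) = ((j : ℕ) + 1) % N then 1
    else if (j : ℕ) = ((k : ℕ) + 1) % N then -1 else 0

/-- Anti-symmetrized adjacency matrix of the simple directed path on `N` vertices. -/
def pathAsAdj (N : ℕ) : Matrix (Fin N) (Fin N) ℂ :=
  fun j k => if (k : ℕ) = (j : ℕ) + 1 then 1
    else if (j : ℕ) = (k : ℕ) + 1 then -1 else 0

namespace DiracAux


variable {D r : ℕ} {N : Fin D → ℕ}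

lemma prod_delta_eq (μ : Fin D) (x y : ∀ ν, Fin (N ν)) :
    (∏ ν ∈ Finset.univ.erase μ, if x ν = y ν then (1:ℂ) else 0)
      = if Function.update y μ (x μ) = x then 1 else 0 := by
  rw [Finset.prod_boole]
  congr 1
  simp only [eq_iff_iff, Finset.mem_erase, Finset.mem_univ, and_true, funext_iff]
  constructor
  · intro h ν
    rcases eq_or_ne ν μ with rfl | hne
    · simp
    · rw [Function.update_of_ne hne]
      exact (h ν hne).symm
  · intro h ν hne
    have := h ν
    rwa [Function.update_of_ne hne, eq_comm] at this

lemma sum_delta_update (μ : Fin D) (x : ∀ ν, Fin (N ν)) (f : (∀ ν, Fin (N ν)) → ℂ) :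
    (∑ y : ∀ ν, Fin (N ν), if Function.update y μ (x μ) = x then f y else 0)
      = ∑ k : Fin (N μ), f (Function.update x μ k) := by
  rw [← Finset.sum_filter]
  have himg : (Finset.univ.filter fun y : ∀ ν, Fin (N ν) => Function.update y μ (x μ) = x)
      = Finset.univ.image fun k : Fin (N μ) => Function.update x μ k := by
    ext y
    simp only [Finset.mem_filter, Finset.mem_univ, true_and, Finset.mem_image]
    constructor
    · intro h
      refine ⟨y μ, funext fun ν => ?_⟩
      rcases eq_or_ne ν μ with rfl | hne
      · simp
      · rw [Function.update_of_ne hne]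
        have := congrFun h ν
        rw [Function.update_of_ne hne] at this; exact this.symm
    · rintro ⟨k, rfl⟩
      simp
  rw [himg, Finset.sum_image]
  intro a _ b _ hab
  have := congrFun hab μ
  simpa using this


lemma mod_succ_pred {N : ℕ} (hN : 1 ≤ N) (m : ℕ) (hm : m < N) :
    ((m + (N - 1)) % N + 1) % N = m := by
  rw [Nat.mod_add_mod]
  have : m + (N - 1) + 1 = m + N := by omega
  rw [this, Nat.add_mod_right, Nat.mod_eq_of_lt hm]

lemma mod_pred_succ {N : ℕ} (hN : 1 ≤ N) (m : ℕ) (hm : m < N) :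
    ((m + 1) % N + (N - 1)) % N = m := by
  rw [Nat.mod_add_mod]
  have : m + 1 + (N - 1) = m + N := by omega
  rw [this, Nat.add_mod_right, Nat.mod_eq_of_lt hm]

lemma mod_two_contra {N : ℕ} (hN : 3 ≤ N) (m : ℕ) (hm : m < N) (h : (m + 2) % N = m) :
    False := by
  have h3 : (m + 2) % N = m % N := by rw [h, Nat.mod_eq_of_lt hm]
  have h4 := (Nat.modEq_iff_dvd' (show m ≤ m + 2 by omega)).mp h3.symm
  have h5 : N ∣ 2 := by
    have he : m + 2 - m = 2 := by omega
    rwa [he] at h4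
  have := Nat.le_of_dvd (by norm_num) h5
  omega

lemma cycle_apply {N : ℕ} (hN : 3 ≤ N) (j a b : Fin N)
    (ha : (a : ℕ) = ((j : ℕ) + 1) % N) (hb : (b : ℕ) = ((j : ℕ) + (N - 1)) % N)
    (f : Fin N → ℂ) :
    ∑ k, cycleAsAdj N j k * f k = f a - f b := by
  have hb1 : ((b : ℕ) + 1) % N = (j : ℕ) := by
    rw [hb]; exact mod_succ_pred (by omega) _ j.isLt
  have hab : a ≠ b := by
    intro h
    have hv : ((j : ℕ) + 1) % N = ((j : ℕ) + (N - 1)) % N := by rw [← ha, h, hb]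
    have h2 : ((j : ℕ) + 2) % N = (j : ℕ) := by
      rw [show (j : ℕ) + 2 = (j : ℕ) + 1 + 1 by ring, ← Nat.mod_add_mod, hv,
        Nat.mod_add_mod, show (j : ℕ) + (N - 1) + 1 = (j : ℕ) + N by omega,
        Nat.add_mod_right, Nat.mod_eq_of_lt j.isLt]
    exact mod_two_contra hN _ j.isLt h2
  rw [Finset.sum_eq_add_of_mem a b (Finset.mem_univ a) (Finset.mem_univ b) hab ?side]
  · have hfa : cycleAsAdj N j a = 1 := by
      show (if ((a : ℕ) = ((j : ℕ) + 1) % N) then (1:ℂ)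
        else if ((j : ℕ) = ((a : ℕ) + 1) % N) then -1 else 0) = 1
      rw [if_pos ha]
    have hfb : cycleAsAdj N j b = -1 := by
      have hba : ¬ ((b : ℕ) = ((j : ℕ) + 1) % N) := fun h =>
        hab (Fin.ext (ha.trans h.symm))
      show (if ((b : ℕ) = ((j : ℕ) + 1) % N) then (1:ℂ)
        else if ((j : ℕ) = ((b : ℕ) + 1) % N) then -1 else 0) = -1
      rw [if_neg hba, if_pos hb1.symm]
    rw [hfa, hfb]
    ring
  · intro c _ hc
    have h1 : ¬ ((c : ℕ) = ((j : ℕ) + 1) % N) := fun h => hc.1 (Fin.ext (h.trans ha.symm))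
    have h2 : ¬ ((j : ℕ) = ((c : ℕ) + 1) % N) := by
      intro h
      apply hc.2
      apply Fin.ext
      rw [hb, h, Nat.mod_add_mod]
      have : (c : ℕ) + 1 + (N - 1) = (c : ℕ) + N := by omega
      rw [this, Nat.add_mod_right, Nat.mod_eq_of_lt c.isLt]
    show (if ((c : ℕ) = ((j : ℕ) + 1) % N) then (1:ℂ)
      else if ((j : ℕ) = ((c : ℕ) + 1) % N) then -1 else 0) * f c = 0
    rw [if_neg h1, if_neg h2, zero_mul]

lemma path_apply {N : ℕ} (j : Fin N) (f : Fin N → ℂ) :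
    ∑ k, pathAsAdj N j k * f k
      = (if h : (j : ℕ) + 1 < N then f ⟨(j : ℕ) + 1, h⟩ else 0)
        - (if h : 0 < (j : ℕ) then f ⟨(j : ℕ) - 1, by omega⟩ else 0) := by
  have split : ∀ k : Fin N, pathAsAdj N j k * f k
      = (if (k : ℕ) = (j : ℕ) + 1 then f k else 0)
        - (if (j : ℕ) = (k : ℕ) + 1 then f k else 0) := by
    intro k
    show (if (k : ℕ) = (j : ℕ) + 1 then (1:ℂ)
      else if (j : ℕ) = (k : ℕ) + 1 then -1 else 0) * f k = _
    by_cases h1 : (k : ℕ) = (j : ℕ) + 1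
    · have h2 : ¬ (j : ℕ) = (k : ℕ) + 1 := by omega
      rw [if_pos h1, if_pos h1, if_neg h2]
      ring
    · rw [if_neg h1, if_neg h1]
      by_cases h2 : (j : ℕ) = (k : ℕ) + 1
      · rw [if_pos h2, if_pos h2]
        ring
      · rw [if_neg h2, if_neg h2]
        ring
  rw [Finset.sum_congr rfl fun k _ => split k, Finset.sum_sub_distrib]
  congr 1
  · by_cases h : (j : ℕ) + 1 < N
    · rw [dif_pos h]
      have : ∀ k : Fin N, ((k : ℕ) = (j : ℕ) + 1) ↔ k = ⟨(j : ℕ) + 1, h⟩ := by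
        intro k; exact ⟨fun hh => Fin.ext hh, fun hh => by rw [hh]⟩
      rw [Finset.sum_congr rfl fun k _ => by rw [if_congr (this k) rfl rfl]]
      simp
    · rw [dif_neg h]
      apply Finset.sum_eq_zero
      intro k _
      rw [if_neg]
      omega
  · by_cases h : 0 < (j : ℕ)
    · rw [dif_pos h]
      have : ∀ k : Fin N, ((j : ℕ) = (k : ℕ) + 1) ↔ k = ⟨(j : ℕ) - 1, by omega⟩ := by
        intro k
        constructor
        · intro hh; apply Fin.ext; show (k : ℕ) = (j : ℕ) - 1; omega
        · intro hh; subst hh; show (j : ℕ) = (j : ℕ) - 1 + 1; omega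
      rw [Finset.sum_congr rfl fun k _ => by rw [if_congr (this k) rfl rfl]]
      simp
    · rw [dif_neg h]
      apply Finset.sum_eq_zero
      intro k _
      rw [if_neg]
      omega

lemma cycle_antisym {N : ℕ} (hN : 3 ≤ N) (j k : Fin N) :
    cycleAsAdj N k j = - cycleAsAdj N j k := by
  show (if (j : ℕ) = ((k : ℕ) + 1) % N then (1:ℂ)
      else if (k : ℕ) = ((j : ℕ) + 1) % N then -1 else 0)
    = -(if (k : ℕ) = ((j : ℕ) + 1) % N then (1:ℂ)
      else if (j : ℕ) = ((k : ℕ) + 1) % N then -1 else 0)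
  by_cases h1 : (j : ℕ) = ((k : ℕ) + 1) % N <;>
    by_cases h2 : (k : ℕ) = ((j : ℕ) + 1) % N
  · exfalso
    apply mod_two_contra hN (j : ℕ) j.isLt
    rw [show (j : ℕ) + 2 = (j : ℕ) + 1 + 1 by ring, ← Nat.mod_add_mod, ← h2, ← h1]
  · rw [if_pos h1, if_neg h2, if_pos h1]
    try norm_num
  · rw [if_neg h1, if_pos h2, if_pos h2]
    try norm_num
  · rw [if_neg h1, if_neg h2, if_neg h2, if_neg h1]
    try norm_num

lemma path_antisym {N : ℕ} (j k : Fin N) :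
    pathAsAdj N k j = - pathAsAdj N j k := by
  show (if (j : ℕ) = (k : ℕ) + 1 then (1:ℂ)
      else if (k : ℕ) = (j : ℕ) + 1 then -1 else 0)
    = -(if (k : ℕ) = (j : ℕ) + 1 then (1:ℂ)
      else if (j : ℕ) = (k : ℕ) + 1 then -1 else 0)
  by_cases h1 : (j : ℕ) = (k : ℕ) + 1 <;> by_cases h2 : (k : ℕ) = (j : ℕ) + 1
  · omega
  · rw [if_pos h1, if_neg h2, if_pos h1]
    try norm_num
  · rw [if_neg h1, if_pos h2, if_pos h2]
    try norm_num
  · rw [if_neg h1, if_neg h2, if_neg h2, if_neg h1]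
    try norm_num

lemma cycle_real {N : ℕ} (j k : Fin N) :
    (starRingEnd ℂ) (cycleAsAdj N j k) = cycleAsAdj N j k := by
  show (starRingEnd ℂ) (if (k : ℕ) = ((j : ℕ) + 1) % N then (1:ℂ)
      else if (j : ℕ) = ((k : ℕ) + 1) % N then -1 else 0)
    = (if (k : ℕ) = ((j : ℕ) + 1) % N then (1:ℂ)
      else if (j : ℕ) = ((k : ℕ) + 1) % N then -1 else 0)
  split_ifs <;> simp

lemma path_real {N : ℕ} (j k : Fin N) :
    (starRingEnd ℂ) (pathAsAdj N j k) = pathAsAdj N j k := by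
  show (starRingEnd ℂ) (if (k : ℕ) = (j : ℕ) + 1 then (1:ℂ)
      else if (j : ℕ) = (k : ℕ) + 1 then -1 else 0)
    = (if (k : ℕ) = (j : ℕ) + 1 then (1:ℂ)
      else if (j : ℕ) = (k : ℕ) + 1 then -1 else 0)
  split_ifs <;> simp



variable {D r : ℕ} {N : Fin D → ℕ}

noncomputable def slotB (A : ∀ μ, Matrix (Fin (N μ)) (Fin (N μ)) ℂ) (μ : Fin D) :
    ((∀ ν, Fin (N ν)) × Fin r → ℂ) →ₗ[ℂ] ((∀ ν, Fin (N ν)) × Fin r → ℂ) where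
  toFun v := fun p => ∑ k, A μ (p.1 μ) k * v (Function.update p.1 μ k, p.2)
  map_add' v w := by funext p; simp [Pi.add_apply, mul_add, Finset.sum_add_distrib]
  map_smul' c v := by funext p; simp [Finset.mul_sum, mul_left_comm]

noncomputable def gamOp (γ : Fin D → Matrix (Fin r) (Fin r) ℂ) (μ : Fin D) :
    ((∀ ν, Fin (N ν)) × Fin r → ℂ) →ₗ[ℂ] ((∀ ν, Fin (N ν)) × Fin r → ℂ) where
  toFun v := fun p => ∑ t, γ μ p.2 t * v (p.1, t)
  map_add' v w := by funext p; simp [Pi.add_apply, mul_add, Finset.sum_add_distrib]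
  map_smul' c v := by funext p; simp [Finset.mul_sum, mul_left_comm]

@[simp] lemma slotB_apply (A : ∀ μ, Matrix (Fin (N μ)) (Fin (N μ)) ℂ) (μ : Fin D)
    (v : (∀ ν, Fin (N ν)) × Fin r → ℂ) (p) :
    slotB A μ v p = ∑ k, A μ (p.1 μ) k * v (Function.update p.1 μ k, p.2) := rfl

@[simp] lemma gamOp_apply (γ : Fin D → Matrix (Fin r) (Fin r) ℂ) (μ : Fin D)
    (v : (∀ ν, Fin (N ν)) × Fin r → ℂ) (p) :
    gamOp (N := N) γ μ v p = ∑ t, γ μ p.2 t * v (p.1, t) := rfl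

lemma toLin_Dop (A : ∀ μ, Matrix (Fin (N μ)) (Fin (N μ)) ℂ)
    (γ : Fin D → Matrix (Fin r) (Fin r) ℂ) :
    Matrix.toLin' (Matrix.of fun p q : (∀ μ, Fin (N μ)) × Fin r =>
        ∑ μ, A μ (p.1 μ) (q.1 μ) * γ μ p.2 q.2 *
          ∏ ν ∈ Finset.univ.erase μ, (if p.1 ν = q.1 ν then (1:ℂ) else 0))
      = ∑ μ, (gamOp γ μ) ∘ₗ (slotB A μ) := by
  apply LinearMap.ext; intro v
  funext p
  rw [Matrix.toLin'_apply]
  simp only [Matrix.mulVec, dotProduct, Matrix.of_apply, Finset.sum_mul]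
  rw [Finset.sum_comm]
  rw [LinearMap.sum_apply, Finset.sum_apply]
  refine Finset.sum_congr rfl fun μ _ => ?_
  rw [Fintype.sum_prod_type]
  have h1 : ∀ y : ∀ ν, Fin (N ν), ∀ t : Fin r,
      A μ (p.1 μ) (y μ) * γ μ p.2 t *
        (∏ ν ∈ Finset.univ.erase μ, if p.1 ν = y ν then (1:ℂ) else 0) * v (y, t)
      = if Function.update y μ (p.1 μ) = p.1
          then A μ (p.1 μ) (y μ) * γ μ p.2 t * v (y, t) else 0 := by
    intro y t
    rw [prod_delta_eq]
    split <;> ring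
  calc (∑ y : ∀ ν, Fin (N ν), ∑ t : Fin r,
          A μ (p.1 μ) (y μ) * γ μ p.2 t *
            (∏ ν ∈ Finset.univ.erase μ, if p.1 ν = y ν then (1:ℂ) else 0) * v (y, t))
      = ∑ y : ∀ ν, Fin (N ν), if Function.update y μ (p.1 μ) = p.1
          then (∑ t : Fin r, A μ (p.1 μ) (y μ) * γ μ p.2 t * v (y, t)) else 0 := by
        refine Finset.sum_congr rfl fun y _ => ?_
        rw [Finset.sum_congr rfl fun t _ => h1 y t]
        split <;> simp
    _ = ∑ k : Fin (N μ), ∑ t : Fin r,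
          A μ (p.1 μ) ((Function.update p.1 μ k) μ) * γ μ p.2 t *
            v (Function.update p.1 μ k, t) := by
        exact sum_delta_update μ p.1 _
    _ = (gamOp γ μ ∘ₗ slotB A μ) v p := by
        simp only [LinearMap.comp_apply, gamOp_apply, slotB_apply, Function.update_self,
          Finset.mul_sum]
        rw [Finset.sum_comm]
        refine Finset.sum_congr rfl fun k _ => Finset.sum_congr rfl fun t _ => by ring


lemma slotB_comm (A : ∀ μ, Matrix (Fin (N μ)) (Fin (N μ)) ℂ) (μ ν : Fin D) :
    (slotB (r := r) A μ) ∘ₗ (slotB A ν) = (slotB A ν) ∘ₗ (slotB A μ) := by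
  rcases eq_or_ne μ ν with rfl | hne
  · rfl
  apply LinearMap.ext; intro v; funext p
  simp only [LinearMap.comp_apply, slotB_apply, Finset.mul_sum]
  rw [Finset.sum_comm]
  refine Finset.sum_congr rfl fun l _ => Finset.sum_congr rfl fun k _ => ?_
  rw [Function.update_of_ne hne.symm, Function.update_of_ne hne,
    Function.update_comm hne]
  ring

lemma gam_slot_comm (A : ∀ μ, Matrix (Fin (N μ)) (Fin (N μ)) ℂ)
    (γ : Fin D → Matrix (Fin r) (Fin r) ℂ) (μ ν : Fin D) :
    (gamOp (N := N) γ μ) ∘ₗ (slotB A ν) = (slotB A ν) ∘ₗ (gamOp γ μ) := by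
  apply LinearMap.ext; intro v; funext p
  simp only [LinearMap.comp_apply, slotB_apply, gamOp_apply, Finset.mul_sum]
  rw [Finset.sum_comm]
  exact Finset.sum_congr rfl fun k _ => Finset.sum_congr rfl fun t _ => by ring

lemma gam_clifford (γ : Fin D → Matrix (Fin r) (Fin r) ℂ)
    (hγ : ∀ μ ν, γ μ * γ ν + γ ν * γ μ =
      if μ = ν then (2 : ℂ) • (1 : Matrix (Fin r) (Fin r) ℂ) else 0) (μ ν : Fin D) :
    (gamOp (N := N) γ μ) ∘ₗ (gamOp γ ν) + (gamOp γ ν) ∘ₗ (gamOp γ μ)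
      = if μ = ν then (2 : ℂ) • LinearMap.id else 0 := by
  apply LinearMap.ext; intro v; funext p
  have key : ∀ (α β : Fin D),
      ((gamOp (N := N) γ α) ∘ₗ (gamOp γ β)) v p = ∑ u, (γ α * γ β) p.2 u * v (p.1, u) := by
    intro α β
    simp only [LinearMap.comp_apply, gamOp_apply, Finset.mul_sum, Matrix.mul_apply,
      Finset.sum_mul]
    rw [Finset.sum_comm]
    exact Finset.sum_congr rfl fun u _ => Finset.sum_congr rfl fun t _ => by ring
  simp only [LinearMap.add_apply, Pi.add_apply, key]
  rw [← Finset.sum_add_distrib]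
  have : ∑ u, ((γ μ * γ ν) p.2 u * v (p.1, u) + (γ ν * γ μ) p.2 u * v (p.1, u))
      = ∑ u, ((γ μ * γ ν + γ ν * γ μ) p.2 u) * v (p.1, u) := by
    exact Finset.sum_congr rfl fun u _ => by simp [Matrix.add_apply]; ring
  rw [this, hγ μ ν]
  rcases eq_or_ne μ ν with rfl | hne
  · simp only [if_pos rfl]
    simp [Matrix.smul_apply, Matrix.one_apply, ite_mul, Finset.sum_ite_eq']
  · simp [if_neg hne]

lemma L_sq (A : ∀ μ, Matrix (Fin (N μ)) (Fin (N μ)) ℂ)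
    (γ : Fin D → Matrix (Fin r) (Fin r) ℂ)
    (hγ : ∀ μ ν, γ μ * γ ν + γ ν * γ μ =
      if μ = ν then (2 : ℂ) • (1 : Matrix (Fin r) (Fin r) ℂ) else 0) :
    (∑ μ, (gamOp (N := N) (r := r) γ μ) ∘ₗ (slotB A μ)) ∘ₗ
      (∑ μ, (gamOp γ μ) ∘ₗ (slotB A μ)) = ∑ μ, (slotB A μ) ∘ₗ (slotB A μ) := by
  -- work in the endomorphism ring
  let g : Fin D → Module.End ℂ ((∀ ν, Fin (N ν)) × Fin r → ℂ) := fun μ => gamOp γ μ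
  let b : Fin D → Module.End ℂ ((∀ ν, Fin (N ν)) × Fin r → ℂ) := fun μ => slotB A μ
  have hbb : ∀ μ ν, b μ * b ν = b ν * b μ := fun μ ν => slotB_comm A μ ν
  have hgb : ∀ μ ν, g μ * b ν = b ν * g μ := fun μ ν => gam_slot_comm A γ μ ν
  have hgg : ∀ μ ν, g μ * g ν + g ν * g μ
      = if μ = ν then (2 : ℂ) • (1 : Module.End ℂ _) else 0 := fun μ ν =>
    gam_clifford γ hγ μ ν
  show (∑ μ, g μ * b μ) * (∑ μ, g μ * b μ) = ∑ μ, b μ * b μ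
  have expand : (∑ μ, g μ * b μ) * (∑ μ, g μ * b μ)
      = ∑ μ, ∑ ν, g μ * g ν * (b μ * b ν) := by
    rw [Finset.sum_mul_sum]
    refine Finset.sum_congr rfl fun μ _ => Finset.sum_congr rfl fun ν _ => ?_
    calc g μ * b μ * (g ν * b ν) = g μ * (b μ * g ν) * b ν := by noncomm_ring
      _ = g μ * (g ν * b μ) * b ν := by rw [hgb]
      _ = g μ * g ν * (b μ * b ν) := by noncomm_ring
  have swap : ∑ μ, ∑ ν, g μ * g ν * (b μ * b ν) = ∑ μ, ∑ ν, g ν * g μ * (b μ * b ν) := by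
    rw [Finset.sum_comm]
    refine Finset.sum_congr rfl fun μ _ => Finset.sum_congr rfl fun ν _ => ?_
    rw [hbb]
  have two_eq : (2 : ℂ) • ((∑ μ, g μ * b μ) * (∑ μ, g μ * b μ))
      = (2 : ℂ) • (∑ μ, b μ * b μ) := by
    calc (2 : ℂ) • ((∑ μ, g μ * b μ) * (∑ μ, g μ * b μ))
        = ∑ μ, ∑ ν, (g μ * g ν + g ν * g μ) * (b μ * b ν) := by
          rw [two_smul, expand]
          nth_rewrite 2 [swap]
          rw [← Finset.sum_add_distrib]
          refine Finset.sum_congr rfl fun μ _ => ?_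
          rw [← Finset.sum_add_distrib]
          exact Finset.sum_congr rfl fun ν _ => (add_mul _ _ _).symm
      _ = ∑ μ, ∑ ν, (if μ = ν then ((2 : ℂ) • (1 : Module.End ℂ _)) else 0) * (b μ * b ν) := by
          simp only [hgg]
      _ = (2 : ℂ) • (∑ μ, b μ * b μ) := by
          rw [Finset.smul_sum]
          refine Finset.sum_congr rfl fun μ _ => ?_
          rw [Finset.sum_eq_single μ]
          · simp [smul_mul_assoc]
          · intro ν _ hne
            rw [if_neg fun h => hne h.symm, zero_mul]
          · intro h
            exact absurd (Finset.mem_univ μ) h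
  have := congrArg (fun z => (2:ℂ)⁻¹ • z) two_eq
  simpa [smul_smul] using this

section Adjoint

variable (A : ∀ μ, Matrix (Fin (N μ)) (Fin (N μ)) ℂ)

lemma dot_slotB (hA : ∀ μ j k, A μ k j = -A μ j k)
    (hAr : ∀ μ j k, (starRingEnd ℂ) (A μ j k) = A μ j k) (μ : Fin D)
    (v w : (∀ ν, Fin (N ν)) × Fin r → ℂ) :
    (∑ p, (starRingEnd ℂ) (v p) * slotB A μ w p)
      = -∑ p, (starRingEnd ℂ) (slotB A μ v p) * w p := by
  have hinv : Function.Involutive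
      (fun z : (∀ ν, Fin (N ν)) × Fin (N μ) => (Function.update z.1 μ z.2, z.1 μ)) := by
    rintro ⟨x, k⟩
    simp only [Function.update_self, Function.update_idem, Function.update_eq_self]
  have lhs_eq : (∑ p, (starRingEnd ℂ) (v p) * slotB A μ w p)
      = ∑ z : (∀ ν, Fin (N ν)) × Fin (N μ), ∑ s : Fin r,
          (starRingEnd ℂ) (v (z.1, s)) * (A μ (z.1 μ) z.2 * w (Function.update z.1 μ z.2, s)) := by
    rw [Fintype.sum_prod_type, Fintype.sum_prod_type]
    refine Finset.sum_congr rfl fun x _ => ?_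
    simp only [slotB_apply, Finset.mul_sum]
    exact Finset.sum_comm
  have rhs_eq : (∑ p, (starRingEnd ℂ) (slotB A μ v p) * w p)
      = ∑ z : (∀ ν, Fin (N ν)) × Fin (N μ), ∑ s : Fin r,
          A μ (z.1 μ) z.2 * (starRingEnd ℂ) (v (Function.update z.1 μ z.2, s)) * w (z.1, s) := by
    rw [Fintype.sum_prod_type, Fintype.sum_prod_type]
    refine Finset.sum_congr rfl fun x _ => ?_
    simp only [slotB_apply, map_sum, map_mul, hAr, Finset.sum_mul]
    exact Finset.sum_comm
  rw [lhs_eq, rhs_eq]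
  rw [← Equiv.sum_comp (hinv.toPerm _)]
  rw [← Finset.sum_neg_distrib]
  refine Finset.sum_congr rfl fun z _ => ?_
  obtain ⟨x, k⟩ := z
  have h1 : (hinv.toPerm _) (x, k) = (Function.update x μ k, x μ) := rfl
  rw [h1]
  simp only [Function.update_self, Function.update_idem, Function.update_eq_self]
  rw [← Finset.sum_neg_distrib]
  refine Finset.sum_congr rfl fun s _ => ?_
  rw [hA μ k (x μ)]
  ring

lemma ker_iff (hA : ∀ μ j k, A μ k j = -A μ j k)
    (hAr : ∀ μ j k, (starRingEnd ℂ) (A μ j k) = A μ j k)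
    (γ : Fin D → Matrix (Fin r) (Fin r) ℂ)
    (hγ : ∀ μ ν, γ μ * γ ν + γ ν * γ μ =
      if μ = ν then (2 : ℂ) • (1 : Matrix (Fin r) (Fin r) ℂ) else 0)
    (v : (∀ ν, Fin (N ν)) × Fin r → ℂ) :
    (∑ μ, (gamOp γ μ) ∘ₗ (slotB A μ)) v = 0 ↔ ∀ μ, slotB A μ v = 0 := by
  constructor
  · intro hv
    have h2 : (∑ μ, (slotB (r := r) A μ) ∘ₗ (slotB A μ)) v = 0 := by
      rw [← L_sq A γ hγ, LinearMap.comp_apply, hv, map_zero]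
    have e1 : ∑ μ, ∑ p, (starRingEnd ℂ) (v p) * slotB A μ (slotB A μ v) p = 0 := by
      rw [Finset.sum_comm]
      have : ∀ p, ∑ μ, (starRingEnd ℂ) (v p) * slotB A μ (slotB A μ v) p
          = (starRingEnd ℂ) (v p) * ((∑ μ, (slotB A μ) ∘ₗ (slotB A μ)) v p) := by
        intro p
        rw [LinearMap.sum_apply, Finset.sum_apply, Finset.mul_sum]
        rfl
      rw [Finset.sum_congr rfl fun p _ => this p]
      simp [h2]
    have e2 : ∀ μ, ∑ p, (starRingEnd ℂ) (v p) * slotB A μ (slotB A μ v) p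
        = -∑ p, (starRingEnd ℂ) (slotB A μ v p) * (slotB A μ v p) :=
      fun μ => dot_slotB A hA hAr μ v (slotB A μ v)
    rw [Finset.sum_congr rfl fun μ _ => e2 μ, Finset.sum_neg_distrib, neg_eq_zero] at e1
    have hterm : ∀ (μ : Fin D) p, (starRingEnd ℂ) (slotB A μ v p) * (slotB A μ v p)
        = ((Complex.normSq (slotB A μ v p) : ℝ) : ℂ) := fun μ p => by
      rw [mul_comm, Complex.mul_conj]
    rw [Finset.sum_congr rfl fun μ _ => Finset.sum_congr rfl fun p _ => hterm μ p] at e1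
    have h4 : ∑ μ : Fin D, ∑ p, Complex.normSq (slotB A μ v p) = 0 := by
      have := e1
      push_cast at this
      exact_mod_cast this
    intro μ
    funext p
    have hnn : ∀ μ : Fin D, μ ∈ Finset.univ →
        0 ≤ ∑ p, Complex.normSq (slotB A μ v p) :=
      fun μ _ => Finset.sum_nonneg fun p _ => Complex.normSq_nonneg _
    have h5 := (Finset.sum_eq_zero_iff_of_nonneg hnn).mp h4 μ (Finset.mem_univ μ)
    have h6 := (Finset.sum_eq_zero_iff_of_nonneg
      fun p _ => Complex.normSq_nonneg (slotB A μ v p)).mp h5 p (Finset.mem_univ p)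
    simpa using Complex.normSq_eq_zero.mp h6
  · intro h
    rw [LinearMap.sum_apply]
    have : ∀ μ : Fin D, ((gamOp γ μ) ∘ₗ (slotB A μ)) v = 0 := by
      intro μ
      rw [LinearMap.comp_apply, h, map_zero]
    rw [Finset.sum_congr rfl fun μ _ => this μ]
    simp

end Adjoint

section Structure

variable {D r : ℕ} {N : Fin D → ℕ}

lemma slotB_eval (A : ∀ μ, Matrix (Fin (N μ)) (Fin (N μ)) ℂ) (μ : Fin D)
    (v : (∀ ν, Fin (N ν)) × Fin r → ℂ) (x : ∀ ν, Fin (N ν)) (s : Fin r) (j : Fin (N μ)) :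
    slotB A μ v (Function.update x μ j, s)
      = ∑ k, A μ j k * v (Function.update x μ k, s) := by
  simp only [slotB_apply, Function.update_self, Function.update_idem]

def NRed (cyc : Fin D → Bool) : Fin D → ℕ := fun μ => if cyc μ then 2 else 1

lemma NRed_pos (cyc : Fin D → Bool) (μ : Fin D) : 0 < NRed cyc μ := by
  unfold NRed; split <;> omega

lemma NRed_eq_two {cyc : Fin D → Bool} {μ : Fin D} (hc : cyc μ = true) :
    NRed cyc μ = 2 := by unfold NRed; rw [hc]; simp

lemma NRed_eq_one {cyc : Fin D → Bool} {μ : Fin D} (hc : cyc μ = false) :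
    NRed cyc μ = 1 := by unfold NRed; rw [hc]; simp

def redX (cyc : Fin D → Bool) (x : ∀ μ, Fin (N μ)) : ∀ μ, Fin (NRed cyc μ) :=
  fun μ => ⟨(x μ : ℕ) % NRed cyc μ, Nat.mod_lt _ (NRed_pos cyc μ)⟩

def embX (cyc : Fin D → Bool) (hle : ∀ μ, NRed cyc μ ≤ N μ)
    (y : ∀ μ, Fin (NRed cyc μ)) : ∀ μ, Fin (N μ) :=
  fun μ => ⟨(y μ : ℕ), lt_of_lt_of_le (y μ).isLt (hle μ)⟩

def good (cyc : Fin D → Bool) (x : ∀ μ, Fin (N μ)) : Prop :=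
  ∀ μ, cyc μ = false → Even ((x μ : ℕ))

open Classical in
noncomputable def Phi (cyc : Fin D → Bool)
    (w : (∀ μ, Fin (NRed cyc μ)) × Fin r → ℂ) :
    (∀ ν, Fin (N ν)) × Fin r → ℂ :=
  fun p => if good cyc p.1 then w (redX cyc p.1, p.2) else 0

variable (cyc : Fin D → Bool) (A : ∀ μ, Matrix (Fin (N μ)) (Fin (N μ)) ℂ)

lemma descent (hcyc : ∀ μ, cyc μ = true → Even (N μ) ∧ 4 ≤ N μ)
    (hAc : ∀ μ, cyc μ = true → A μ = cycleAsAdj (N μ))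
    (hAp : ∀ μ, cyc μ = false → A μ = pathAsAdj (N μ))
    (v : (∀ ν, Fin (N ν)) × Fin r → ℂ) (hker : ∀ μ, slotB A μ v = 0)
    (μ : Fin D) (x : ∀ ν, Fin (N ν)) (s : Fin r) (h2 : 2 ≤ (x μ : ℕ)) :
    v (x, s) = v (Function.update x μ
      ⟨(x μ : ℕ) - 2, lt_of_le_of_lt (Nat.sub_le _ _) (x μ).isLt⟩, s) := by
  have hNμ : (x μ : ℕ) < N μ := (x μ).isLt
  set j : Fin (N μ) := ⟨(x μ : ℕ) - 1, by omega⟩ with hjdef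
  have hjv : (j : ℕ) = (x μ : ℕ) - 1 := rfl
  have h0 := congrFun (hker μ) (Function.update x μ j, s)
  rw [Pi.zero_apply, slotB_eval] at h0
  by_cases hc : cyc μ = true
  · have hN3 : 3 ≤ N μ := by have := (hcyc μ hc).2; omega
    have haj : ((x μ : ℕ)) = ((j : ℕ) + 1) % N μ := by
      rw [hjv, show (x μ : ℕ) - 1 + 1 = (x μ : ℕ) by omega, Nat.mod_eq_of_lt hNμ]
    have hbj : (((⟨(x μ : ℕ) - 2, lt_of_le_of_lt (Nat.sub_le _ _) (x μ).isLt⟩ :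
        Fin (N μ)) : ℕ)) = ((j : ℕ) + (N μ - 1)) % N μ := by
      show (x μ : ℕ) - 2 = ((j : ℕ) + (N μ - 1)) % N μ
      rw [hjv, show (x μ : ℕ) - 1 + (N μ - 1) = ((x μ : ℕ) - 2) + N μ by omega,
        Nat.add_mod_right, Nat.mod_eq_of_lt (by omega)]
    rw [hAc μ hc, cycle_apply hN3 j (x μ)
      ⟨(x μ : ℕ) - 2, lt_of_le_of_lt (Nat.sub_le _ _) (x μ).isLt⟩ haj hbj
      (fun k => v (Function.update x μ k, s))] at h0
    rw [Function.update_eq_self] at h0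
    exact sub_eq_zero.mp h0
  · rw [hAp μ (by simpa using hc), path_apply j (fun k => v (Function.update x μ k, s))] at h0
    have hlt1 : (j : ℕ) + 1 < N μ := by omega
    have hpos : 0 < (j : ℕ) := by omega
    rw [dif_pos hlt1, dif_pos hpos] at h0
    have key := sub_eq_zero.mp h0
    have gen : ∀ (z1 z2 : Fin (N μ)),
        v (Function.update x μ z1, s) = v (Function.update x μ z2, s) →
        (z1 : ℕ) = (x μ : ℕ) → (z2 : ℕ) = (x μ : ℕ) - 2 →
        v (x, s) = v (Function.update x μ
          ⟨(x μ : ℕ) - 2, lt_of_le_of_lt (Nat.sub_le _ _) (x μ).isLt⟩, s) := by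
      intro z1 z2 hkey hz1 hz2
      have e1 : z1 = x μ := Fin.ext hz1
      have e2 : z2 = (⟨(x μ : ℕ) - 2, lt_of_le_of_lt (Nat.sub_le _ _) (x μ).isLt⟩ :
          Fin (N μ)) := Fin.ext hz2
      rw [e1, Function.update_eq_self, e2] at hkey
      exact hkey
    exact gen _ _ key (show (j : ℕ) + 1 = (x μ : ℕ) by omega)
      (show (j : ℕ) - 1 = (x μ : ℕ) - 2 by omega)

lemma path_kill
    (hAp : ∀ μ, cyc μ = false → A μ = pathAsAdj (N μ))
    (v : (∀ ν, Fin (N ν)) × Fin r → ℂ) (hker : ∀ μ, slotB A μ v = 0)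
    (μ : Fin D) (hcf : cyc μ = false) (x : ∀ ν, Fin (N ν)) (s : Fin r)
    (h1 : (x μ : ℕ) = 1) :
    v (x, s) = 0 := by
  have hNμ : (x μ : ℕ) < N μ := (x μ).isLt
  set j : Fin (N μ) := ⟨0, by omega⟩ with hjdef
  have hjv : (j : ℕ) = 0 := rfl
  have h0 := congrFun (hker μ) (Function.update x μ j, s)
  rw [Pi.zero_apply, slotB_eval, hAp μ hcf,
    path_apply j (fun k => v (Function.update x μ k, s))] at h0
  have hlt1 : (j : ℕ) + 1 < N μ := by omega
  have hnpos : ¬ 0 < (j : ℕ) := by omega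
  rw [dif_pos hlt1, dif_neg hnpos] at h0
  have gen : ∀ z : Fin (N μ), (z : ℕ) = 1 →
      v (Function.update x μ z, s) - 0 = 0 → v (x, s) = 0 := by
    intro z hz h
    have : z = x μ := Fin.ext (by omega)
    rwa [this, Function.update_eq_self, sub_zero] at h
  exact gen _ (show (j : ℕ) + 1 = 1 by omega) h0

lemma NRed_le (hcyc : ∀ μ, cyc μ = true → Even (N μ) ∧ 4 ≤ N μ)
    (hpath : ∀ μ, cyc μ = false → Odd (N μ)) (μ : Fin D) : NRed cyc μ ≤ N μ := by
  by_cases hc : cyc μ = true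
  · have := (hcyc μ hc).2
    rw [NRed_eq_two hc]
    omega
  · have hcf : cyc μ = false := by simpa using hc
    obtain ⟨m, hm⟩ := (hpath μ hcf)
    rw [NRed_eq_one hcf]
    omega

open Classical in
lemma classify (hcyc : ∀ μ, cyc μ = true → Even (N μ) ∧ 4 ≤ N μ)
    (hpath : ∀ μ, cyc μ = false → Odd (N μ))
    (hAc : ∀ μ, cyc μ = true → A μ = cycleAsAdj (N μ))
    (hAp : ∀ μ, cyc μ = false → A μ = pathAsAdj (N μ))
    (v : (∀ ν, Fin (N ν)) × Fin r → ℂ) (hker : ∀ μ, slotB A μ v = 0)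
    (x : ∀ ν, Fin (N ν)) (s : Fin r) :
    v (x, s) = if good cyc x
      then v (embX cyc (NRed_le cyc hcyc hpath) (redX cyc x), s) else 0 := by
  suffices H : ∀ n (x : ∀ ν, Fin (N ν)) (s : Fin r), (∑ μ, (x μ : ℕ)) ≤ n →
      v (x, s) = if good cyc x
        then v (embX cyc (NRed_le cyc hcyc hpath) (redX cyc x), s) else 0 from
    H (∑ μ, (x μ : ℕ)) x s le_rfl
  intro n
  induction n with
  | zero =>
    intro x s hx
    have hall : ∀ μ, (x μ : ℕ) = 0 := by
      intro μ
      have h0 : (∑ μ, (x μ : ℕ)) = 0 := Nat.le_zero.mp hx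
      exact Finset.sum_eq_zero_iff.mp h0 μ (Finset.mem_univ μ)
    have hgood : good cyc x := fun μ _ => by rw [hall μ]; exact Even.zero
    rw [if_pos hgood]
    have hemb : embX cyc (NRed_le cyc hcyc hpath) (redX cyc x) = x := by
      funext μ
      apply Fin.ext
      show (x μ : ℕ) % NRed cyc μ = (x μ : ℕ)
      rw [hall μ, Nat.zero_mod]
    rw [hemb]
  | succ n ih =>
    intro x s hx
    by_cases hbig : ∃ μ, 2 ≤ (x μ : ℕ)
    · obtain ⟨μ, hμ⟩ := hbig
      set x' := Function.update x μ
        (⟨(x μ : ℕ) - 2, lt_of_le_of_lt (Nat.sub_le _ _) (x μ).isLt⟩ : Fin (N μ)) with hx'def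
      have step : v (x, s) = v (x', s) := descent cyc A hcyc hAc hAp v hker μ x s hμ
      have hx'μ : (x' μ : ℕ) = (x μ : ℕ) - 2 := by
        rw [hx'def]
        simp [Function.update_self]
      have hx'ν : ∀ ν, ν ≠ μ → x' ν = x ν := by
        intro ν hν
        rw [hx'def, Function.update_of_ne hν]
      have hsum : (∑ ν, (x' ν : ℕ)) ≤ n := by
        rw [← Finset.add_sum_erase _ _ (Finset.mem_univ μ)] at hx ⊢
        have : ∑ ν ∈ Finset.univ.erase μ, (x' ν : ℕ)
            = ∑ ν ∈ Finset.univ.erase μ, (x ν : ℕ) :=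
          Finset.sum_congr rfl fun ν hν => by
            rw [hx'ν ν (Finset.mem_erase.mp hν).1]
        rw [this, hx'μ]
        omega
      have hgood : good cyc x' ↔ good cyc x := by
        unfold good
        constructor <;> intro h ν hν
        · rcases eq_or_ne ν μ with rfl | hne
          · have := h ν hν
            rw [hx'μ] at this
            rcases this with ⟨m, hm⟩
            exact ⟨m + 1, by omega⟩
          · have := h ν hν
            rwa [hx'ν ν hne] at this
        · rcases eq_or_ne ν μ with rfl | hne
          · rw [hx'μ]
            obtain ⟨m, hm⟩ := h ν hν
            exact ⟨m - 1, by omega⟩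
          · rw [hx'ν ν hne]
            exact h ν hν
      have hred : redX cyc x' = redX cyc x := by
        funext ν
        apply Fin.ext
        show (x' ν : ℕ) % NRed cyc ν = (x ν : ℕ) % NRed cyc ν
        rcases eq_or_ne ν μ with rfl | hne
        · rw [hx'μ]
          rcases Bool.eq_false_or_eq_true (cyc ν) with hc | hc
          · rw [NRed_eq_two hc]; omega
          · rw [NRed_eq_one hc]; omega
        · rw [hx'ν ν hne]
      rw [step, ih x' s hsum, hred]
      by_cases hg : good cyc x
      · rw [if_pos hg, if_pos (hgood.mpr hg)]
      · rw [if_neg hg, if_neg (fun h => hg (hgood.mp h))]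
    · push_neg at hbig
      by_cases hodd : ∃ μ, cyc μ = false ∧ (x μ : ℕ) = 1
      · obtain ⟨μ, hcf, h1⟩ := hodd
        have hz := path_kill cyc A hAp v hker μ hcf x s h1
        have hng : ¬ good cyc x := by
          intro hg
          have := hg μ hcf
          rw [h1] at this
          simp at this
        rw [if_neg hng, hz]
      · push_neg at hodd
        have hgood : good cyc x := by
          intro μ hcf
          have hle1 := hbig μ
          have hne1 := hodd μ hcf
          have : (x μ : ℕ) = 0 := by omega
          rw [this]
          exact Even.zero
        rw [if_pos hgood]
        have hemb : embX cyc (NRed_le cyc hcyc hpath) (redX cyc x) = x := by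
          funext μ
          apply Fin.ext
          show (x μ : ℕ) % NRed cyc μ = (x μ : ℕ)
          have hle1 := hbig μ
          rcases Bool.eq_false_or_eq_true (cyc μ) with hc | hc
          · rw [NRed_eq_two hc]; omega
          · have := hodd μ hc
            rw [NRed_eq_one hc]; omega
        rw [hemb]

open Classical in
lemma phi_ker (hcyc : ∀ μ, cyc μ = true → Even (N μ) ∧ 4 ≤ N μ)
    (hpath : ∀ μ, cyc μ = false → Odd (N μ))
    (hAc : ∀ μ, cyc μ = true → A μ = cycleAsAdj (N μ))
    (hAp : ∀ μ, cyc μ = false → A μ = pathAsAdj (N μ))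
    (w : (∀ μ, Fin (NRed cyc μ)) × Fin r → ℂ) (μ : Fin D) :
    slotB (r := r) A μ (Phi cyc w) = 0 := by
  funext p
  obtain ⟨x, s⟩ := p
  rw [Pi.zero_apply, slotB_apply]
  by_cases hc : cyc μ = true
  · rw [hAc μ hc]
    have hN4 := (hcyc μ hc).2
    obtain ⟨m, hm⟩ := (hcyc μ hc).1
    rw [cycle_apply (by omega) (x μ)
      ⟨((x μ : ℕ) + 1) % N μ, Nat.mod_lt _ (by omega)⟩
      ⟨((x μ : ℕ) + (N μ - 1)) % N μ, Nat.mod_lt _ (by omega)⟩ rfl rfl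
      (fun k => Phi cyc w (Function.update x μ k, s))]
    rw [sub_eq_zero]
    have hgood : ∀ k : Fin (N μ), good cyc (Function.update x μ k) ↔ good cyc x := by
      intro k
      unfold good
      constructor <;> intro h ν hν
      · have hne : ν ≠ μ := fun he => by rw [he, hc] at hν; simp at hν
        have := h ν hν
        rwa [Function.update_of_ne hne] at this
      · have hne : ν ≠ μ := fun he => by rw [he, hc] at hν; simp at hν
        rw [Function.update_of_ne hne]
        exact h ν hν
    have hkey : ∀ k k' : Fin (N μ), (k : ℕ) % 2 = (k' : ℕ) % 2 →
        Phi cyc w (Function.update x μ k, s) = Phi cyc w (Function.update x μ k', s) := by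
      intro k k' hkk
      show (if good cyc (Function.update x μ k)
          then w (redX cyc (Function.update x μ k), s) else 0)
        = (if good cyc (Function.update x μ k')
          then w (redX cyc (Function.update x μ k'), s) else 0)
      have hred : redX cyc (Function.update x μ k) = redX cyc (Function.update x μ k') := by
        funext ν
        apply Fin.ext
        show (Function.update x μ k ν : ℕ) % NRed cyc ν
          = (Function.update x μ k' ν : ℕ) % NRed cyc ν
        rcases eq_or_ne ν μ with rfl | hne
        · rw [Function.update_self, Function.update_self, NRed_eq_two hc]
          exact hkk
        · rw [Function.update_of_ne hne, Function.update_of_ne hne]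
      rw [hred]
      by_cases hg : good cyc x
      · rw [if_pos ((hgood k).mpr hg), if_pos ((hgood k').mpr hg)]
      · rw [if_neg (fun h => hg ((hgood k).mp h)), if_neg (fun h => hg ((hgood k').mp h))]
    apply hkey
    show (((x μ : ℕ) + 1) % N μ) % 2 = (((x μ : ℕ) + (N μ - 1)) % N μ) % 2
    rw [Nat.mod_mod_of_dvd _ ⟨m, by omega⟩, Nat.mod_mod_of_dvd _ ⟨m, by omega⟩]
    omega
  · have hcf : cyc μ = false := by simpa using hc
    rw [hAp μ hcf, path_apply (x μ) (fun k => Phi cyc w (Function.update x μ k, s))]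
    obtain ⟨m, hm⟩ := hpath μ hcf
    have hNpos : 0 < N μ := by omega
    by_cases hQ : ∀ ν, ν ≠ μ → cyc ν = false → Even ((x ν : ℕ))
    · have hgood : ∀ k : Fin (N μ), good cyc (Function.update x μ k) ↔ Even ((k : ℕ)) := by
        intro k
        constructor
        · intro hg
          have := hg μ hcf
          rwa [Function.update_self] at this
        · intro hk ν hν
          rcases eq_or_ne ν μ with rfl | hne
          · rwa [Function.update_self]
          · rw [Function.update_of_ne hne]
            exact hQ ν hne hν
      have hred : ∀ k : Fin (N μ),
          redX cyc (Function.update x μ k) = redX cyc (Function.update x μ ⟨0, hNpos⟩) := by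
        intro k
        funext ν
        apply Fin.ext
        show (Function.update x μ k ν : ℕ) % NRed cyc ν
          = (Function.update x μ (⟨0, hNpos⟩ : Fin (N μ)) ν : ℕ) % NRed cyc ν
        rcases eq_or_ne ν μ with rfl | hne
        · rw [NRed_eq_one hcf]
          omega
        · rw [Function.update_of_ne hne, Function.update_of_ne hne]
      have hval : ∀ k : Fin (N μ), Phi cyc w (Function.update x μ k, s)
          = if Even ((k : ℕ))
            then w (redX cyc (Function.update x μ (⟨0, hNpos⟩ : Fin (N μ))), s) else 0 := by
        intro k
        show (if good cyc (Function.update x μ k)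
            then w (redX cyc (Function.update x μ k), s) else 0) = _
        rw [hred k]
        by_cases he : Even ((k : ℕ))
        · rw [if_pos ((hgood k).mpr he), if_pos he]
        · rw [if_neg (fun h => he ((hgood k).mp h)), if_neg he]
      rcases Nat.even_or_odd ((x μ : ℕ)) with he | ho
      · have hxm : (x μ : ℕ) % 2 = 0 := Nat.even_iff.mp he
        have E1 : ∀ h : (x μ : ℕ) + 1 < N μ,
            Phi cyc w (Function.update x μ ⟨(x μ : ℕ) + 1, h⟩, s) = 0 := by
          intro h
          rw [hval]
          exact if_neg (show ¬ Even ((x μ : ℕ) + 1) by rw [Nat.even_iff]; omega)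
        have E2 : ∀ (z : Fin (N μ)), (z : ℕ) = (x μ : ℕ) - 1 → 0 < (x μ : ℕ) →
            Phi cyc w (Function.update x μ z, s) = 0 := by
          intro z hz hp
          rw [hval]
          exact if_neg (show ¬ Even ((z : ℕ)) by rw [Nat.even_iff]; omega)
        by_cases h1 : (x μ : ℕ) + 1 < N μ
        · rw [dif_pos h1, E1 h1]
          by_cases h2 : 0 < (x μ : ℕ)
          · rw [dif_pos h2, E2 _ rfl h2, sub_zero]
          · rw [dif_neg h2, sub_zero]
        · rw [dif_neg h1]
          by_cases h2 : 0 < (x μ : ℕ)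
          · rw [dif_pos h2, E2 _ rfl h2, sub_zero]
          · rw [dif_neg h2, sub_zero]
      · have hxm : (x μ : ℕ) % 2 = 1 := Nat.odd_iff.mp ho
        have hxlt : (x μ : ℕ) < N μ := (x μ).isLt
        have h1 : (x μ : ℕ) + 1 < N μ := by omega
        have h2 : 0 < (x μ : ℕ) := by omega
        rw [dif_pos h1, dif_pos h2, hval, hval,
          if_pos (show Even ((x μ : ℕ) + 1) by rw [Nat.even_iff]; omega),
          if_pos (show Even ((x μ : ℕ) - 1) by rw [Nat.even_iff]; omega),
          sub_self]
    · push_neg at hQ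
      obtain ⟨ν, hνμ, hνf, hνodd⟩ := hQ
      have hzero : ∀ k : Fin (N μ), Phi cyc w (Function.update x μ k, s) = 0 := by
        intro k
        show (if good cyc (Function.update x μ k)
            then w (redX cyc (Function.update x μ k), s) else 0) = 0
        rw [if_neg]
        intro hg
        have := hg ν hνf
        rw [Function.update_of_ne hνμ] at this
        exact hνodd this
      by_cases h1 : (x μ : ℕ) + 1 < N μ <;> by_cases h2 : 0 < (x μ : ℕ)
      · rw [dif_pos h1, dif_pos h2, hzero, hzero, sub_self]
      · rw [dif_pos h1, dif_neg h2, hzero, sub_zero]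
      · rw [dif_neg h1, dif_pos h2, hzero, zero_sub, neg_zero]
      · rw [dif_neg h1, dif_neg h2, sub_zero]

open Classical in
noncomputable def PhiL (cyc : Fin D → Bool) :
    ((∀ μ, Fin (NRed cyc μ)) × Fin r → ℂ) →ₗ[ℂ] ((∀ ν, Fin (N ν)) × Fin r → ℂ) where
  toFun := Phi cyc
  map_add' w w' := by
    funext p
    show (if good cyc p.1 then (w + w') (redX cyc p.1, p.2) else 0) = _
    by_cases h : good cyc p.1
    · simp only [if_pos h, Pi.add_apply]
      show _ = (if good cyc p.1 then w (redX cyc p.1, p.2) else 0)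
        + (if good cyc p.1 then w' (redX cyc p.1, p.2) else 0)
      rw [if_pos h, if_pos h]
    · simp only [if_neg h, Pi.add_apply]
      show (0:ℂ) = (if good cyc p.1 then w (redX cyc p.1, p.2) else 0)
        + (if good cyc p.1 then w' (redX cyc p.1, p.2) else 0)
      rw [if_neg h, if_neg h, add_zero]
  map_smul' c w := by
    funext p
    show (if good cyc p.1 then (c • w) (redX cyc p.1, p.2) else 0) = _
    by_cases h : good cyc p.1
    · simp only [if_pos h, Pi.smul_apply, RingHom.id_apply]
      show _ = c • (if good cyc p.1 then w (redX cyc p.1, p.2) else 0)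
      rw [if_pos h]
    · simp only [if_neg h, RingHom.id_apply]
      show (0:ℂ) = c • (if good cyc p.1 then w (redX cyc p.1, p.2) else 0)
      rw [if_neg h, smul_zero]

open Classical in
lemma phi_emb (cyc : Fin D → Bool) (hle : ∀ μ, NRed cyc μ ≤ N μ)
    (w : (∀ μ, Fin (NRed cyc μ)) × Fin r → ℂ)
    (y : ∀ μ, Fin (NRed cyc μ)) (t : Fin r) :
    Phi cyc w (embX cyc hle y, t) = w (y, t) := by
  show (if good cyc (embX cyc hle y) then w (redX cyc (embX cyc hle y), t) else 0) = _
  have hgood : good cyc (embX cyc hle y) := by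
    intro μ hcf
    show Even ((y μ : ℕ))
    have h1 : ((y μ : ℕ)) < 1 := lt_of_lt_of_le (y μ).isLt (NRed_eq_one hcf).le
    have h0 : ((y μ : ℕ)) = 0 := by omega
    rw [h0]
    exact Even.zero
  rw [if_pos hgood]
  congr 1
  refine Prod.ext ?_ rfl
  funext μ
  apply Fin.ext
  show ((y μ : ℕ)) % NRed cyc μ = (y μ : ℕ)
  exact Nat.mod_eq_of_lt (y μ).isLt

end Structure

end DiracAux

open Matrix in
theorem dirac_ker_dim_product_graph
    (D : ℕ) (N : Fin D → ℕ) (cyc : Fin D → Bool) (d : ℕ)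
    (hd : d = (Finset.univ.filter fun μ => cyc μ = true).card)
    (hcyc : ∀ μ, cyc μ = true → Even (N μ) ∧ 4 ≤ N μ)
    (hpath : ∀ μ, cyc μ = false → Odd (N μ))
    (r : ℕ) (hr : 1 ≤ r)
    (γ : Fin D → Matrix (Fin r) (Fin r) ℂ)
    (hγ : ∀ μ ν, γ μ * γ ν + γ ν * γ μ =
      if μ = ν then (2 : ℂ) • (1 : Matrix (Fin r) (Fin r) ℂ) else 0) :
    let A : ∀ μ, Matrix (Fin (N μ)) (Fin (N μ)) ℂ :=
      fun μ => if cyc μ then cycleAsAdj (N μ) else pathAsAdj (N μ)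
    let Dop : Matrix ((∀ μ, Fin (N μ)) × Fin r) ((∀ μ, Fin (N μ)) × Fin r) ℂ :=
      Matrix.of fun p q => ∑ μ, (A μ (p.1 μ) (q.1 μ)) * (γ μ p.2 q.2) *
        ∏ ν ∈ Finset.univ.erase μ, (if p.1 ν = q.1 ν then (1 : ℂ) else 0)
    Module.finrank ℂ (LinearMap.ker (Matrix.toLin' Dop)) = r * 2 ^ d := by
  intro A Dop
  have hAc : ∀ μ, cyc μ = true → A μ = cycleAsAdj (N μ) := fun μ h => by
    show (if cyc μ then cycleAsAdj (N μ) else pathAsAdj (N μ)) = cycleAsAdj (N μ)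
    rw [if_pos h]
  have hAp : ∀ μ, cyc μ = false → A μ = pathAsAdj (N μ) := fun μ h => by
    show (if cyc μ then cycleAsAdj (N μ) else pathAsAdj (N μ)) = pathAsAdj (N μ)
    rw [if_neg (by simp [h])]
  have hA : ∀ μ j k, A μ k j = - A μ j k := by
    intro μ j k
    by_cases hc : cyc μ = true
    · rw [hAc μ hc]
      exact DiracAux.cycle_antisym (by have := (hcyc μ hc).2; omega) j k
    · have hcf : cyc μ = false := by simpa using hc
      rw [hAp μ hcf]
      exact DiracAux.path_antisym j k
  have hAr : ∀ μ j k, (starRingEnd ℂ) (A μ j k) = A μ j k := by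
    intro μ j k
    by_cases hc : cyc μ = true
    · rw [hAc μ hc]; exact DiracAux.cycle_real j k
    · have hcf : cyc μ = false := by simpa using hc
      rw [hAp μ hcf]; exact DiracAux.path_real j k
  have hDop : Matrix.toLin' Dop
      = ∑ μ, (DiracAux.gamOp γ μ) ∘ₗ (DiracAux.slotB A μ) :=
    DiracAux.toLin_Dop A γ
  set K := LinearMap.ker (Matrix.toLin' Dop) with hK
  have hmem : ∀ v, v ∈ K ↔ ∀ μ, DiracAux.slotB A μ v = 0 := by
    intro v
    rw [hK, LinearMap.mem_ker, hDop]
    exact DiracAux.ker_iff A hA hAr γ hγ v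
  have hle := DiracAux.NRed_le (N := N) cyc hcyc hpath
  let Φ := (DiracAux.PhiL (N := N) (r := r) cyc).codRestrict K
    (fun w => (hmem _).mpr (fun μ => DiracAux.phi_ker cyc A hcyc hpath hAc hAp w μ))
  have hinj : Function.Injective Φ := by
    intro w w' h
    have h2 : DiracAux.Phi (N := N) cyc w = DiracAux.Phi cyc w' :=
      congrArg Subtype.val h
    funext q
    obtain ⟨y, t⟩ := q
    have h3 := congrFun h2 (DiracAux.embX cyc hle y, t)
    rwa [DiracAux.phi_emb cyc hle w y t, DiracAux.phi_emb cyc hle w' y t] at h3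
  have hsurj : Function.Surjective Φ := by
    rintro ⟨v, hv⟩
    have hker := (hmem v).mp hv
    refine ⟨fun q => v (DiracAux.embX cyc hle q.1, q.2), ?_⟩
    apply Subtype.ext
    show DiracAux.Phi cyc (fun q => v (DiracAux.embX cyc hle q.1, q.2)) = v
    funext p
    obtain ⟨x, s⟩ := p
    have hcls := DiracAux.classify cyc A hcyc hpath hAc hAp v hker x s
    exact hcls.symm
  let e := LinearEquiv.ofBijective Φ ⟨hinj, hsurj⟩
  rw [← LinearEquiv.finrank_eq e]
  rw [Module.finrank_pi]
  rw [Fintype.card_prod, Fintype.card_pi]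
  simp only [Fintype.card_fin]
  have hprod : (∏ μ, DiracAux.NRed cyc μ) = 2 ^ d := by
    rw [hd]
    unfold DiracAux.NRed
    rw [Finset.prod_ite]
    simp
  rw [hprod, mul_comm]
end

section
/- Let G be the cartesian product of d cycle digraphs (any numbers of vertices ≥ 3) and (D-d) simple directed paths (any numbers of vertices ≥ 2), and 𝒟(G) = Σ_μ (A_as)_μ ⊗ γ_μ the associated Dirac operator. Then dim ker 𝒟(G) ≤ rank(γ) · 2^d. -/
set_option maxHeartbeats 1000000
open Matrix

variable {D r : ℕ} {N : Fin D → ℕ}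

def kron (f : ∀ μ, Matrix (Fin (N μ)) (Fin (N μ)) ℂ) (g : Matrix (Fin r) (Fin r) ℂ) :
    Matrix ((∀ μ, Fin (N μ)) × Fin r) ((∀ μ, Fin (N μ)) × Fin r) ℂ :=
  Matrix.of fun p q => (∏ μ, f μ (p.1 μ) (q.1 μ)) * g p.2 q.2

lemma kron_mul (f f' : ∀ μ, Matrix (Fin (N μ)) (Fin (N μ)) ℂ) (g g' : Matrix (Fin r) (Fin r) ℂ) :
    kron f g * kron f' g' = kron (fun μ => f μ * f' μ) (g * g') := by
  ext ⟨p, s⟩ ⟨q, t⟩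
  simp only [Matrix.mul_apply, kron, Matrix.of_apply]
  rw [Fintype.sum_prod_type]
  have h1 : ∀ m : ∀ μ, Fin (N μ), ∀ u : Fin r,
      ((∏ μ, f μ (p μ) (m μ)) * g s u) * ((∏ μ, f' μ (m μ) (q μ)) * g' u t)
        = (∏ μ, f μ (p μ) (m μ) * f' μ (m μ) (q μ)) * (g s u * g' u t) := by
    intro m u
    rw [Finset.prod_mul_distrib]; ring
  calc (∑ m : ∀ μ, Fin (N μ), ∑ u : Fin r,
        ((∏ μ, f μ (p μ) (m μ)) * g s u) * ((∏ μ, f' μ (m μ) (q μ)) * g' u t))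
      = ∑ m : ∀ μ, Fin (N μ), ∑ u : Fin r,
        (∏ μ, f μ (p μ) (m μ) * f' μ (m μ) (q μ)) * (g s u * g' u t) := by
        simp only [h1]
    _ = (∑ m : ∀ μ, Fin (N μ), ∏ μ, f μ (p μ) (m μ) * f' μ (m μ) (q μ))
          * (∑ u : Fin r, g s u * g' u t) := by
        rw [Finset.sum_mul_sum]
    _ = (∏ μ, ∑ k, f μ (p μ) k * f' μ k (q μ)) * (∑ u : Fin r, g s u * g' u t) := by
        rw [Finset.prod_univ_sum]
        simp [Fintype.piFinset_univ]
    _ = (∏ μ, (f μ * f' μ) (p μ) (q μ)) * (g * g') s t := by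
        simp [Matrix.mul_apply]

lemma kron_add (f : ∀ μ, Matrix (Fin (N μ)) (Fin (N μ)) ℂ) (g g' : Matrix (Fin r) (Fin r) ℂ) :
    kron f (g + g') = kron f g + kron f g' := by
  ext ⟨p, s⟩ ⟨q, t⟩
  simp [kron, mul_add]

lemma kron_zero (f : ∀ μ, Matrix (Fin (N μ)) (Fin (N μ)) ℂ) :
    kron f (0 : Matrix (Fin r) (Fin r) ℂ) = 0 := by
  ext ⟨p, s⟩ ⟨q, t⟩
  simp [kron]

lemma kron_smul (f : ∀ μ, Matrix (Fin (N μ)) (Fin (N μ)) ℂ) (c : ℂ)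
    (g : Matrix (Fin r) (Fin r) ℂ) : kron f (c • g) = c • kron f g := by
  ext ⟨p, s⟩ ⟨q, t⟩
  simp [kron]; ring




lemma mod_succ_eq {N x : ℕ} (hx : x < N) :
    (x + 1) % N = if x + 1 = N then 0 else x + 1 := by
  split_ifs with h
  · simp [h]
  · exact Nat.mod_eq_of_lt (by omega)

lemma cycle_star {N : ℕ} (j k : Fin N) : star (cycleAsAdj N j k) = cycleAsAdj N j k := by
  unfold cycleAsAdj; split_ifs <;> simp

lemma path_star {N : ℕ} (j k : Fin N) : star (pathAsAdj N j k) = pathAsAdj N j k := by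
  unfold pathAsAdj; split_ifs <;> simp

lemma cycle_antisymm {N : ℕ} (hN : 3 ≤ N) (j k : Fin N) :
    cycleAsAdj N k j = -cycleAsAdj N j k := by
  have hj := j.isLt; have hk := k.isLt
  have e1 := mod_succ_eq hj; have e2 := mod_succ_eq hk
  have key : ¬((j:ℕ) = ((k:ℕ)+1) % N ∧ (k:ℕ) = ((j:ℕ)+1) % N) := by
    rw [e1, e2]; split_ifs <;> omega
  unfold cycleAsAdj
  split_ifs with h1 h2 <;> first | simp | (exfalso; exact key ⟨by assumption, by assumption⟩)

lemma path_antisymm {N : ℕ} (j k : Fin N) :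
    pathAsAdj N k j = -pathAsAdj N j k := by
  unfold pathAsAdj
  split_ifs <;> first | simp | omega





lemma sum_two_point {n : ℕ} (y : Fin n → ℂ) (a b : Fin n) (hab : a ≠ b) (A : Fin n → ℂ)
    (hA : ∀ k, A k = (if k = a then 1 else 0) - (if k = b then 1 else 0)) :
    ∑ k, A k * y k = y a - y b := by
  simp only [hA, sub_mul, ite_mul, one_mul, zero_mul, Finset.sum_sub_distrib,
    Finset.sum_ite_eq', Finset.mem_univ, if_true]

lemma sum_one_point {n : ℕ} (y : Fin n → ℂ) (a : Fin n) (A : Fin n → ℂ)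
    (hA : ∀ k, A k = if k = a then 1 else 0) :
    ∑ k, A k * y k = y a := by
  simp only [hA, ite_mul, one_mul, zero_mul, Finset.sum_ite_eq', Finset.mem_univ, if_true]

lemma cycle_row {N j : ℕ} (hN : 3 ≤ N) (h2 : 2 ≤ j) (hjN : j < N) (k : Fin N) :
    cycleAsAdj N ⟨j-1, by omega⟩ k =
      (if k = (⟨j, hjN⟩ : Fin N) then 1 else 0)
        - (if k = (⟨j-2, by omega⟩ : Fin N) then 1 else 0) := by
  have hk := k.isLt
  show (if (k:ℕ) = ((j-1) + 1) % N then (1:ℂ)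
      else if (j-1) = ((k:ℕ)+1) % N then -1 else 0) = _
  have hj1 : (j - 1) + 1 = j := by omega
  rw [hj1, Nat.mod_eq_of_lt hjN, mod_succ_eq hk]
  simp only [Fin.ext_iff]
  split_ifs <;> first | (exfalso; omega) | norm_num | exact (‹False›).elim

lemma path_row0 {N : ℕ} (hN : 2 ≤ N) (k : Fin N) :
    pathAsAdj N ⟨0, by omega⟩ k = if k = (⟨1, by omega⟩ : Fin N) then 1 else 0 := by
  show (if (k:ℕ) = 0 + 1 then (1:ℂ) else if 0 = (k:ℕ) + 1 then -1 else 0) = _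
  have h0 : ¬(0 = (k:ℕ) + 1) := by omega
  rw [if_neg h0]
  simp [Fin.ext_iff]

lemma path_row {N j : ℕ} (h2 : 2 ≤ j) (hjN : j < N) (k : Fin N) :
    pathAsAdj N ⟨j-1, by omega⟩ k =
      (if k = (⟨j, hjN⟩ : Fin N) then 1 else 0)
        - (if k = (⟨j-2, by omega⟩ : Fin N) then 1 else 0) := by
  show (if (k:ℕ) = (j-1) + 1 then (1:ℂ) else if (j-1) = (k:ℕ) + 1 then -1 else 0) = _
  simp only [Fin.ext_iff]
  split_ifs <;> first | (exfalso; omega) | norm_num | exact (‹False›).elim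
def deltaF (A : ∀ μ, Matrix (Fin (N μ)) (Fin (N μ)) ℂ) (μ : Fin D) :
    ∀ ν, Matrix (Fin (N ν)) (Fin (N ν)) ℂ := fun ν => if ν = μ then A ν else 1



lemma B_mulVec (A : ∀ μ, Matrix (Fin (N μ)) (Fin (N μ)) ℂ) (μ : Fin D)
    (x : ((∀ ν, Fin (N ν)) × Fin r) → ℂ) (p : ∀ ν, Fin (N ν)) (s : Fin r) :
    (kron (deltaF A μ) 1 *ᵥ x) (p, s)
      = ∑ k, A μ (p μ) k * x (Function.update p μ k, s) := by
  unfold deltaF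
  have hinj : ∀ a b : Fin (N μ), Function.update p μ a = Function.update p μ b → a = b := by
    intro a b h
    have := congrFun h μ
    simpa using this
  have entry : ∀ (q : ∀ ν, Fin (N ν)),
      (∏ ν, ((if ν = μ then A ν else 1) : Matrix (Fin (N ν)) (Fin (N ν)) ℂ) (p ν) (q ν))
        = A μ (p μ) (q μ) *
          (if q ∈ Finset.image (Function.update p μ) Finset.univ then (1:ℂ) else 0) := by
    intro q
    rw [← Finset.mul_prod_erase Finset.univ _ (Finset.mem_univ μ)]
    simp only [if_pos rfl]
    congr 1
    have : ∀ ν ∈ Finset.univ.erase μ,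
        ((if ν = μ then A ν else 1) : Matrix (Fin (N ν)) (Fin (N ν)) ℂ) (p ν) (q ν)
          = if p ν = q ν then (1:ℂ) else 0 := by
      intro ν hν
      rw [if_neg (Finset.mem_erase.mp hν).1, Matrix.one_apply]
    rw [Finset.prod_congr rfl this, Finset.prod_boole]
    congr 1
    simp only [eq_iff_iff]
    constructor
    · intro h
      refine Finset.mem_image.mpr ⟨q μ, Finset.mem_univ _, ?_⟩
      funext ν
      by_cases hν : ν = μ
      · subst hν; simp
      · rw [Function.update_of_ne hν]
        exact h ν (Finset.mem_erase.mpr ⟨hν, Finset.mem_univ _⟩)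
    · intro h ν hν
      obtain ⟨k, _, rfl⟩ := Finset.mem_image.mp h
      rw [Function.update_of_ne (Finset.mem_erase.mp hν).1]
  show ∑ qt : (∀ ν, Fin (N ν)) × Fin r, kron _ _ (p, s) qt * x qt = _
  rw [Fintype.sum_prod_type]
  simp only [kron, Matrix.of_apply, entry, Matrix.one_apply]
  have step1 : ∀ q : ∀ ν, Fin (N ν),
      (∑ t : Fin r, (A μ (p μ) (q μ) *
          (if q ∈ Finset.image (Function.update p μ) Finset.univ then (1:ℂ) else 0)) *
          (if s = t then (1:ℂ) else 0) * x (q, t))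
        = if q ∈ Finset.image (Function.update p μ) Finset.univ
            then A μ (p μ) (q μ) * x (q, s) else 0 := by
    intro q
    calc (∑ t : Fin r, (A μ (p μ) (q μ) *
          (if q ∈ Finset.image (Function.update p μ) Finset.univ then (1:ℂ) else 0)) *
          (if s = t then (1:ℂ) else 0) * x (q, t))
        = ∑ t : Fin r, if s = t then (A μ (p μ) (q μ) *
            (if q ∈ Finset.image (Function.update p μ) Finset.univ then (1:ℂ) else 0)) * x (q, t)
            else 0 := Finset.sum_congr rfl fun t _ => by
          by_cases h : s = t <;> simp [h]
      _ = _ := by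
          rw [Finset.sum_ite_eq Finset.univ s _]
          simp only [Finset.mem_univ, if_true]
          split_ifs <;> ring
  rw [Finset.sum_congr rfl (fun q _ => step1 q)]
  rw [Finset.sum_ite_mem, Finset.univ_inter, Finset.sum_image (fun a _ b _ h => hinj a b h)]
  refine Finset.sum_congr rfl fun k _ => ?_
  rw [Function.update_self]


lemma kron_skew (A : ∀ μ, Matrix (Fin (N μ)) (Fin (N μ)) ℂ)
    (hAstar : ∀ ν j k, star (A ν j k) = A ν j k)
    (hAanti : ∀ ν j k, A ν k j = -(A ν j k)) (μ : Fin D) :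
    (kron (deltaF A μ) (1 : Matrix (Fin r) (Fin r) ℂ))ᴴ = -kron (deltaF A μ) 1 := by
  ext ⟨p, s⟩ ⟨q, t⟩
  rw [Matrix.conjTranspose_apply]
  simp only [kron, Matrix.of_apply, Matrix.neg_apply]
  rw [star_mul']
  have h2 : star ((1 : Matrix (Fin r) (Fin r) ℂ) t s) = (1 : Matrix (Fin r) (Fin r) ℂ) s t := by
    simp [Matrix.one_apply, eq_comm]
  have h1 : star (∏ ν, deltaF A μ ν (q ν) (p ν))
      = -(∏ ν, deltaF A μ ν (p ν) (q ν)) := by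
    rw [show star (∏ ν, deltaF A μ ν (q ν) (p ν))
        = (starRingEnd ℂ) (∏ ν, deltaF A μ ν (q ν) (p ν)) from rfl, map_prod]
    have hfac : ∀ ν, (starRingEnd ℂ) (deltaF A μ ν (q ν) (p ν))
        = (if ν = μ then -(1:ℂ) else 1) * deltaF A μ ν (p ν) (q ν) := by
      intro ν
      by_cases hν : ν = μ
      · simp only [deltaF, if_pos hν]
        rw [show (starRingEnd ℂ) (A ν (q ν) (p ν)) = star (A ν (q ν) (p ν)) from rfl,
          hAstar, hAanti]
        ring
      · simp only [deltaF, if_neg hν, one_mul, Matrix.one_apply]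
        split_ifs with h h' h' <;>
          first | exact absurd h.symm h' | exact absurd h'.symm h | simp
    rw [Finset.prod_congr rfl (fun ν _ => hfac ν), Finset.prod_mul_distrib]
    have : (∏ ν, (if ν = μ then -(1:ℂ) else 1)) = -1 := by
      rw [← Finset.mul_prod_erase Finset.univ _ (Finset.mem_univ μ), if_pos rfl]
      rw [Finset.prod_congr rfl (fun ν hν => if_neg (Finset.mem_erase.mp hν).1)]
      simp
    rw [this]; ring
  rw [h1, h2]; ring

lemma sum_mulVec {I : Type*} [Fintype I] [DecidableEq I] {J : Type*} [Fintype J]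
    (M : J → Matrix I I ℂ) (x : I → ℂ) :
    (∑ j, M j) *ᵥ x = ∑ j, M j *ᵥ x := by
  ext i
  simp [Matrix.mulVec, dotProduct, Matrix.sum_apply, Finset.sum_mul]
  rw [Finset.sum_comm]

lemma dotProduct_sum' {I J : Type*} [Fintype I] [Fintype J] (u : I → ℂ) (v : J → I → ℂ) :
    u ⬝ᵥ (∑ j, v j) = ∑ j, u ⬝ᵥ v j := by
  simp only [dotProduct, Finset.sum_apply, Finset.mul_sum]
  exact Finset.sum_comm

lemma matrix_add_self_cancel {I : Type*} {M P : Matrix I I ℂ} (h : M + M = P + P) : M = P := by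
  ext i j
  have := congrFun (congrFun h i) j
  simp only [Matrix.add_apply] at this
  linear_combination this / 2

lemma sum_update_val {D : ℕ} {N : Fin D → ℕ} (p : ∀ μ, Fin (N μ)) (μ : Fin D) (a : Fin (N μ)) :
    ∑ ν, ((Function.update p μ a) ν : ℕ) = (a : ℕ) + ∑ ν ∈ Finset.univ.erase μ, (p ν : ℕ) := by
  rw [← Finset.add_sum_erase _ _ (Finset.mem_univ μ), Function.update_self]
  congr 1
  exact Finset.sum_congr rfl fun ν hν => by rw [Function.update_of_ne (Finset.mem_erase.mp hν).1]

open Matrix in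
theorem dirac_ker_dim_product_graph_le
    (D : ℕ) (N : Fin D → ℕ) (cyc : Fin D → Bool) (d : ℕ)
    (hd : d = (Finset.univ.filter fun μ => cyc μ = true).card)
    (hcyc : ∀ μ, cyc μ = true → 3 ≤ N μ)
    (hpath : ∀ μ, cyc μ = false → 2 ≤ N μ)
    (r : ℕ) (hr : 1 ≤ r)
    (γ : Fin D → Matrix (Fin r) (Fin r) ℂ)
    (hγ : ∀ μ ν, γ μ * γ ν + γ ν * γ μ =
      if μ = ν then (2 : ℂ) • (1 : Matrix (Fin r) (Fin r) ℂ) else 0) :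
    let A : ∀ μ, Matrix (Fin (N μ)) (Fin (N μ)) ℂ :=
      fun μ => if cyc μ then cycleAsAdj (N μ) else pathAsAdj (N μ)
    let Dop : Matrix ((∀ μ, Fin (N μ)) × Fin r) ((∀ μ, Fin (N μ)) × Fin r) ℂ :=
      Matrix.of fun p q => ∑ μ, (A μ (p.1 μ) (q.1 μ)) * (γ μ p.2 q.2) *
        ∏ ν ∈ Finset.univ.erase μ, (if p.1 ν = q.1 ν then (1 : ℂ) else 0)
    Module.finrank ℂ (LinearMap.ker (Matrix.toLin' Dop)) ≤ r * 2 ^ d := by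
  intro A Dop
  classical
  have hAdef : ∀ μ, A μ = if cyc μ then cycleAsAdj (N μ) else pathAsAdj (N μ) := fun _ => rfl
  have hDopdef : Dop = Matrix.of fun p q => ∑ μ, (A μ (p.1 μ) (q.1 μ)) * (γ μ p.2 q.2) *
      ∏ ν ∈ Finset.univ.erase μ, (if p.1 ν = q.1 ν then (1 : ℂ) else 0) := rfl
  -- basic properties of the A matrices
  have hAstar : ∀ ν j k, star (A ν j k) = A ν j k := by
    intro ν j k
    rw [hAdef]
    rcases h : cyc ν <;> simp only [h, Bool.false_eq_true, if_false, if_true]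
    · exact path_star j k
    · exact cycle_star j k
  have hAanti : ∀ ν j k, A ν k j = -(A ν j k) := by
    intro ν j k
    rw [hAdef]
    rcases h : cyc ν <;> simp only [h, Bool.false_eq_true, if_false, if_true]
    · exact path_antisymm j k
    · exact cycle_antisymm (hcyc ν h) j k
  -- decomposition of the Dirac operator
  have hDeq : Dop = ∑ μ, kron (deltaF A μ) (γ μ) := by
    rw [hDopdef]
    ext ⟨p, s⟩ ⟨q, t⟩
    simp only [Matrix.of_apply, Matrix.sum_apply, kron]
    refine Finset.sum_congr rfl fun μ _ => ?_
    rw [← Finset.mul_prod_erase Finset.univ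
      (fun ν => deltaF A μ ν (p ν) (q ν)) (Finset.mem_univ μ)]
    rw [Finset.prod_congr rfl (fun ν hν => show deltaF A μ ν (p ν) (q ν)
        = if p ν = q ν then (1:ℂ) else 0 from by
      rw [show deltaF A μ ν = (1 : Matrix (Fin (N ν)) (Fin (N ν)) ℂ) from
        if_neg (Finset.mem_erase.mp hν).1, Matrix.one_apply])]
    rw [show deltaF A μ μ = A μ from if_pos rfl]
    ring
  -- the squared Dirac operator
  have hD2 : Dop * Dop = ∑ μ, kron (deltaF A μ) 1 * kron (deltaF A μ) 1 := by
    apply matrix_add_self_cancel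
    have hsymm : ∀ (μ ν : Fin D), (fun ρ => deltaF A ν ρ * deltaF A μ ρ)
        = (fun ρ => deltaF A μ ρ * deltaF A ν ρ) := by
      intro μ ν; funext ρ; simp only [deltaF]; split_ifs <;> simp
    calc Dop * Dop + Dop * Dop
        = (∑ μ, ∑ ν, kron (fun ρ => deltaF A μ ρ * deltaF A ν ρ) (γ μ * γ ν)) +
          (∑ μ, ∑ ν, kron (fun ρ => deltaF A μ ρ * deltaF A ν ρ) (γ ν * γ μ)) := by
          congr 1
          · rw [hDeq, Finset.sum_mul_sum]
            exact Finset.sum_congr rfl fun μ _ => Finset.sum_congr rfl fun ν _ =>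
              kron_mul _ _ _ _
          · rw [hDeq, Finset.sum_mul_sum, Finset.sum_comm]
            exact Finset.sum_congr rfl fun ν _ => Finset.sum_congr rfl fun μ _ => by
              rw [kron_mul, hsymm]
      _ = ∑ μ, ∑ ν, kron (fun ρ => deltaF A μ ρ * deltaF A ν ρ) (γ μ * γ ν + γ ν * γ μ) := by
          rw [← Finset.sum_add_distrib]
          exact Finset.sum_congr rfl fun μ _ => by
            rw [← Finset.sum_add_distrib]
            exact Finset.sum_congr rfl fun ν _ => (kron_add _ _ _).symm
      _ = ∑ μ, ∑ ν, (if μ = ν then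
            kron (fun ρ => deltaF A μ ρ * deltaF A ν ρ)
              ((2:ℂ) • (1 : Matrix (Fin r) (Fin r) ℂ)) else 0) := by
          refine Finset.sum_congr rfl fun μ _ => Finset.sum_congr rfl fun ν _ => ?_
          rw [hγ μ ν]
          split_ifs with h
          · rfl
          · exact kron_zero _
      _ = ∑ μ, kron (fun ρ => deltaF A μ ρ * deltaF A μ ρ)
            ((2:ℂ) • (1 : Matrix (Fin r) (Fin r) ℂ)) := by
          refine Finset.sum_congr rfl fun μ _ => ?_
          rw [Finset.sum_ite_eq Finset.univ μ _, if_pos (Finset.mem_univ μ)]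
      _ = (∑ μ, kron (deltaF A μ) 1 * kron (deltaF A μ) 1) +
          ∑ μ, kron (deltaF A μ) 1 * kron (deltaF A μ) 1 := by
          rw [← Finset.sum_add_distrib]
          refine Finset.sum_congr rfl fun μ _ => ?_
          rw [kron_mul, show (1 : Matrix (Fin r) (Fin r) ℂ) * 1 = 1 from one_mul 1,
            show ((2:ℂ) • (1 : Matrix (Fin r) (Fin r) ℂ)) = 1 + 1 from by
              rw [two_smul], kron_add]
  -- threshold facts
  have hle : ∀ μ, (if cyc μ then 2 else 1) ≤ N μ := by
    intro μ
    rcases h : cyc μ <;> simp only [h, Bool.false_eq_true, if_false, if_true]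
    · have := hpath μ h; omega
    · have := hcyc μ h; omega
  -- embedding of base points
  set emb : ((∀ μ, Fin (if cyc μ then 2 else 1)) × Fin r) → ((∀ μ, Fin (N μ)) × Fin r) :=
    fun b => (fun μ => ⟨(b.1 μ : ℕ), lt_of_lt_of_le (b.1 μ).isLt (hle μ)⟩, b.2) with hembdef
  -- the key vanishing lemma
  have vanish : ∀ (x : ((∀ μ, Fin (N μ)) × Fin r) → ℂ), Dop *ᵥ x = 0 →
      (∀ b, x (emb b) = 0) → x = 0 := by
    intro x hx hb
    -- x is killed by each B μ
    have hBx : ∀ μ, kron (deltaF A μ) 1 *ᵥ x = 0 := by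
      have hx2 : (∑ μ, kron (deltaF A μ) 1 * kron (deltaF A μ) 1) *ᵥ x = 0 := by
        rw [← hD2, ← Matrix.mulVec_mulVec, hx, Matrix.mulVec_zero]
      have hterm : ∀ μ, star x ⬝ᵥ ((kron (deltaF A μ) 1 * kron (deltaF A μ) 1) *ᵥ x)
          = -(star (kron (deltaF A μ) 1 *ᵥ x) ⬝ᵥ (kron (deltaF A μ) 1 *ᵥ x)) := by
        intro μ
        rw [← Matrix.mulVec_mulVec, Matrix.dotProduct_mulVec]
        have hst : star (kron (deltaF A μ) 1 *ᵥ x)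
            = -(star x ᵥ* kron (deltaF A μ) 1) := by
          rw [Matrix.star_mulVec, kron_skew A hAstar hAanti μ, Matrix.vecMul_neg]
        rw [show star x ᵥ* kron (deltaF A μ) 1
            = -(star (kron (deltaF A μ) 1 *ᵥ x)) from by rw [hst, neg_neg],
          neg_dotProduct]
      have hnormform : ∀ (y : ((∀ μ, Fin (N μ)) × Fin r) → ℂ),
          star y ⬝ᵥ y = ((∑ i, Complex.normSq (y i) : ℝ) : ℂ) := by
        intro y
        simp only [dotProduct, Pi.star_apply, Complex.star_def]
        push_cast
        exact Finset.sum_congr rfl fun i _ => by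
          rw [mul_comm, Complex.mul_conj]
      have hsum0 : (∑ μ, ((∑ i, Complex.normSq ((kron (deltaF A μ) 1 *ᵥ x) i) : ℝ) : ℂ)) = 0 := by
        have : (0:ℂ) = ∑ μ, star x ⬝ᵥ ((kron (deltaF A μ) 1 * kron (deltaF A μ) 1) *ᵥ x) := by
          rw [← dotProduct_sum', ← _root_.sum_mulVec, hx2, dotProduct_zero]
        rw [Finset.sum_congr rfl (fun μ _ => hterm μ)] at this
        rw [Finset.sum_congr rfl (fun μ _ => congrArg Neg.neg
          (hnormform (kron (deltaF A μ) 1 *ᵥ x)))] at this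
        rw [Finset.sum_neg_distrib] at this
        exact neg_eq_zero.mp this.symm
      have hreal : (∑ μ, ∑ i, Complex.normSq ((kron (deltaF A μ) 1 *ᵥ x) i)) = (0:ℝ) := by
        rw [← Complex.ofReal_sum] at hsum0
        exact_mod_cast hsum0
      intro μ
      funext i
      have h1 : (∑ i, Complex.normSq ((kron (deltaF A μ) 1 *ᵥ x) i)) = 0 :=
        (Finset.sum_eq_zero_iff_of_nonneg (fun μ _ =>
          Finset.sum_nonneg fun i _ => Complex.normSq_nonneg _)).mp hreal μ (Finset.mem_univ μ)
      have h2 := (Finset.sum_eq_zero_iff_of_nonneg (fun i _ =>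
        Complex.normSq_nonneg _)).mp h1 i (Finset.mem_univ i)
      simpa using Complex.normSq_eq_zero.mp h2
    -- row relations
    have hrow : ∀ (μ : Fin D) (p : ∀ ν, Fin (N ν)) (s : Fin r),
        ∑ k, A μ (p μ) k * x (Function.update p μ k, s) = 0 := by
      intro μ p s
      have h0 := congrFun (hBx μ) (p, s)
      rw [B_mulVec A μ x p s] at h0
      simpa using h0
    -- base points vanish
    have hbasept : ∀ (p : ∀ μ, Fin (N μ)) (s : Fin r),
        (∀ μ, (p μ : ℕ) < (if cyc μ then 2 else 1)) → x (p, s) = 0 := by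
      intro p s hp
      have he : emb (fun μ => (⟨(p μ : ℕ), hp μ⟩ : Fin (if cyc μ then 2 else 1)), s) = (p, s) := by
        rw [hembdef]
      rw [← he]
      exact hb _
    -- induction on the total coordinate sum
    have main : ∀ (n : ℕ) (p : ∀ μ, Fin (N μ)) (s : Fin r),
        (∑ μ, (p μ : ℕ)) ≤ n → x (p, s) = 0 := by
      intro n
      induction n with
      | zero =>
        intro p s hp
        refine hbasept p s fun μ => ?_
        have hz : (p μ : ℕ) = 0 :=
          Finset.sum_eq_zero_iff.mp (Nat.le_zero.mp hp) μ (Finset.mem_univ μ)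
        rw [hz]
        split_ifs <;> omega
      | succ n ih =>
        intro p s hp
        by_cases hbase : ∀ μ, (p μ : ℕ) < (if cyc μ then 2 else 1)
        · exact hbasept p s hbase
        push_neg at hbase
        obtain ⟨μ, hμ⟩ := hbase
        have hErase : (p μ : ℕ) + ∑ ν ∈ Finset.univ.erase μ, (p ν : ℕ) = ∑ ν, (p ν : ℕ) :=
          Finset.add_sum_erase _ (fun ν => (p ν : ℕ)) (Finset.mem_univ μ)
        have hjlt := (p μ).isLt
        rcases hcm : cyc μ
        · -- path factor
          rw [hcm] at hμ
          simp only [Bool.false_eq_true, if_false] at hμ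
          have hN2 : 2 ≤ N μ := hpath μ hcm
          by_cases hj1 : (p μ : ℕ) = 1
          · have hrel := hrow μ (Function.update p μ ⟨0, by omega⟩) s
            simp only [Function.update_self, Function.update_idem] at hrel
            rw [hAdef] at hrel
            simp only [hcm, Bool.false_eq_true, if_false] at hrel
            rw [sum_one_point _ (⟨1, by omega⟩ : Fin (N μ)) _ (path_row0 hN2)] at hrel
            rw [show (⟨1, by omega⟩ : Fin (N μ)) = p μ from Fin.ext hj1.symm,
              Function.update_eq_self] at hrel
            exact hrel
          · have hj2 : 2 ≤ (p μ : ℕ) := by omega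
            have hrel := hrow μ (Function.update p μ ⟨(p μ : ℕ) - 1, by omega⟩) s
            simp only [Function.update_self, Function.update_idem] at hrel
            rw [hAdef] at hrel
            simp only [hcm, Bool.false_eq_true, if_false] at hrel
            rw [sum_two_point _ (⟨(p μ : ℕ), hjlt⟩ : Fin (N μ))
              (⟨(p μ : ℕ) - 2, by omega⟩ : Fin (N μ))
              (by simp only [ne_eq, Fin.mk.injEq]; omega) _ (path_row hj2 hjlt)] at hrel
            rw [show (⟨(p μ : ℕ), hjlt⟩ : Fin (N μ)) = p μ from Fin.ext rfl,
              Function.update_eq_self] at hrel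
            have hih := ih (Function.update p μ ⟨(p μ : ℕ) - 2, by omega⟩) s (by
              rw [sum_update_val]
              simp only []
              omega)
            rw [hih, sub_zero] at hrel
            exact hrel
        · -- cycle factor
          rw [hcm] at hμ
          simp only [if_true] at hμ
          have hN3 : 3 ≤ N μ := hcyc μ hcm
          have hrel := hrow μ (Function.update p μ ⟨(p μ : ℕ) - 1, by omega⟩) s
          simp only [Function.update_self, Function.update_idem] at hrel
          rw [hAdef] at hrel
          simp only [hcm, if_true] at hrel
          rw [sum_two_point _ (⟨(p μ : ℕ), hjlt⟩ : Fin (N μ))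
            (⟨(p μ : ℕ) - 2, by omega⟩ : Fin (N μ))
            (by simp only [ne_eq, Fin.mk.injEq]; omega) _ (cycle_row hN3 hμ hjlt)] at hrel
          rw [show (⟨(p μ : ℕ), hjlt⟩ : Fin (N μ)) = p μ from Fin.ext rfl,
            Function.update_eq_self] at hrel
          have hih := ih (Function.update p μ ⟨(p μ : ℕ) - 2, by omega⟩) s (by
            rw [sum_update_val]
            simp only []
            omega)
          rw [hih, sub_zero] at hrel
          exact hrel
    funext i
    obtain ⟨p, s⟩ := i
    simpa using main (∑ μ, (p μ : ℕ)) p s le_rfl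
  -- the restriction linear map
  have hinj : Function.Injective
      ((LinearMap.funLeft ℂ ℂ emb).comp (LinearMap.ker (Matrix.toLin' Dop)).subtype) := by
    rw [injective_iff_map_eq_zero]
    rintro ⟨x, hxker⟩ hz
    have hx : Dop *ᵥ x = 0 := by
      have := LinearMap.mem_ker.mp hxker
      rwa [Matrix.toLin'_apply] at this
    have hb : ∀ b, x (emb b) = 0 := fun b => congrFun hz b
    have := vanish x hx hb
    exact Subtype.ext this
  have hcount : (∏ μ, (if cyc μ then 2 else 1)) = 2 ^ d := by
    rw [Finset.prod_ite (fun _ => 2) (fun _ => 1), Finset.prod_const, Finset.prod_const,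
      one_pow, mul_one, hd]
  calc Module.finrank ℂ (LinearMap.ker (Matrix.toLin' Dop))
      ≤ Module.finrank ℂ (((∀ μ, Fin (if cyc μ then 2 else 1)) × Fin r) → ℂ) :=
        LinearMap.finrank_le_finrank_of_injective hinj
    _ = Fintype.card ((∀ μ, Fin (if cyc μ then 2 else 1)) × Fin r) := Module.finrank_pi ℂ
    _ = (∏ μ, (if cyc μ then 2 else 1)) * r := by
        simp [Fintype.card_prod, Fintype.card_pi]
    _ = r * 2 ^ d := by rw [hcount, mul_comm]
end

section
/- The rank of the anti-symmetrized adjacency matrix of the cycle digraph on N vertices equals N - 1 if N is odd and N - 2 if N is even. -/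
open Fin.CommRing

variable {N : ℕ}

lemma cycle_entry (hN : 3 ≤ N) (j k : Fin N) :
    haveI : NeZero N := ⟨by omega⟩
    cycleAsAdj N j k = (if k = j + 1 then (1:ℂ) else 0) - (if k = j - 1 then 1 else 0) := by
  haveI : NeZero N := ⟨by omega⟩
  have hv1 : ((1 : Fin N) : ℕ) = 1 := by
    rw [Fin.val_one']; exact Nat.mod_eq_of_lt (by omega)
  have h1 : ((k : ℕ) = ((j : ℕ) + 1) % N) ↔ k = j + 1 := by
    rw [Fin.ext_iff, Fin.val_add, hv1]
  have h2 : ((j : ℕ) = ((k : ℕ) + 1) % N) ↔ k = j - 1 := by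
    have heq : (j = k + 1) ↔ (k = j - 1) := by
      constructor <;> intro h <;> subst h <;> ring
    rw [← heq, Fin.ext_iff, Fin.val_add, hv1]
  have hne : j + 1 ≠ j - 1 := by
    intro h
    have h2' : (2 : Fin N) = 0 := by
      have := sub_eq_zero.mpr h
      rwa [show j + 1 - (j - 1) = 2 by ring] at this
    have hval : ((2 : Fin N) : ℕ) = (0 : Fin N).val := by rw [h2']
    have h22 : ((2 : Fin N) : ℕ) = 2 := by
      rw [show (2 : Fin N) = 1 + 1 by norm_num, Fin.val_add, hv1]
      exact Nat.mod_eq_of_lt (by omega)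
    rw [Fin.val_zero] at hval
    omega
  simp only [cycleAsAdj, h1, h2]
  by_cases hk1 : k = j + 1
  · subst hk1
    simp [hne]
  · by_cases hk2 : k = j - 1
    · subst hk2
      simp [hk1]
    · simp [hk1, hk2]

lemma cycle_mulVec (hN : 3 ≤ N) (x : Fin N → ℂ) (j : Fin N) :
    haveI : NeZero N := ⟨by omega⟩
    (cycleAsAdj N).mulVec x j = x (j + 1) - x (j - 1) := by
  haveI : NeZero N := ⟨by omega⟩
  simp only [Matrix.mulVec, dotProduct, cycle_entry hN, sub_mul, ite_mul, one_mul, zero_mul,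
    Finset.sum_sub_distrib, Finset.sum_ite_eq' Finset.univ, Finset.mem_univ, if_true]

lemma mem_ker_iff (hN : 3 ≤ N) (x : Fin N → ℂ) :
    haveI : NeZero N := ⟨by omega⟩
    (x ∈ LinearMap.ker (cycleAsAdj N).mulVecLin ↔ ∀ j : Fin N, x (j + 2) = x j) := by
  haveI : NeZero N := ⟨by omega⟩
  rw [LinearMap.mem_ker]
  constructor
  · intro h j
    have := congrFun h (j + 1)
    rw [Matrix.mulVecLin_apply, cycle_mulVec hN] at this
    have h2 : (j : Fin N) + 1 + 1 = j + 2 := by ring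
    have h3 : (j : Fin N) + 1 - 1 = j := by ring
    rw [h2, h3] at this
    exact sub_eq_zero.mp this
  · intro h
    funext j
    rw [Matrix.mulVecLin_apply, cycle_mulVec hN, Pi.zero_apply, sub_eq_zero]
    have := h (j - 1)
    rwa [show (j : Fin N) - 1 + 2 = j + 1 by ring] at this

lemma key_periodic (hN : 3 ≤ N) (x : Fin N → ℂ)
    (hx : haveI : NeZero N := ⟨by omega⟩; ∀ j : Fin N, x (j + 2) = x j) :
    haveI : NeZero N := ⟨by omega⟩
    ∀ n m : ℕ, x ((n + 2 * m : ℕ) : Fin N) = x ((n : ℕ) : Fin N) := by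
  haveI : NeZero N := ⟨by omega⟩
  intro n m
  induction m with
  | zero => simp
  | succ m ih =>
      have : ((n + 2 * (m + 1) : ℕ) : Fin N) = ((n + 2 * m : ℕ) : Fin N) + 2 := by
        push_cast; ring
      rw [this, hx, ih]

lemma key_odd (hN : 3 ≤ N) (hodd : Odd N) (x : Fin N → ℂ)
    (hx : haveI : NeZero N := ⟨by omega⟩; ∀ j : Fin N, x (j + 2) = x j) :
    ∀ j : Fin N, x j = x ⟨0, by omega⟩ := by
  haveI : NeZero N := ⟨by omega⟩
  obtain ⟨k, hk⟩ := hodd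
  have hstep : ∀ n : ℕ, x ((n + 1 : ℕ) : Fin N) = x ((n : ℕ) : Fin N) := by
    intro n
    have h1 : x ((n + 1 + 2 * k : ℕ) : Fin N) = x ((n + 1 : ℕ) : Fin N) :=
      key_periodic hN x hx (n + 1) k
    have h2 : ((n + 1 + 2 * k : ℕ) : Fin N) = ((n + N : ℕ) : Fin N) := by
      congr 1; omega
    have h3 : ((n + N : ℕ) : Fin N) = ((n : ℕ) : Fin N) := by
      push_cast; simp
    rw [h2, h3] at h1
    exact h1.symm
  have hall : ∀ n : ℕ, x ((n : ℕ) : Fin N) = x ((0 : ℕ) : Fin N) := by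
    intro n
    induction n with
    | zero => rfl
    | succ n ih => rw [hstep, ih]
  intro j
  have := hall j.val
  rw [Fin.cast_val_eq_self] at this
  rw [this]
  congr 1

lemma key_even (hN : 3 ≤ N) (x : Fin N → ℂ)
    (hx : haveI : NeZero N := ⟨by omega⟩; ∀ j : Fin N, x (j + 2) = x j) :
    ∀ j : Fin N, x j = if (j : ℕ) % 2 = 0 then x ⟨0, by omega⟩ else x ⟨1, by omega⟩ := by
  haveI : NeZero N := ⟨by omega⟩
  intro j
  have h1 : x ((j.val % 2 + 2 * (j.val / 2) : ℕ) : Fin N) = x ((j.val % 2 : ℕ) : Fin N) :=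
    key_periodic hN x hx _ _
  have h2 : (j.val % 2 + 2 * (j.val / 2) : ℕ) = j.val := by omega
  rw [h2, Fin.cast_val_eq_self] at h1
  rw [h1]
  rcases Nat.mod_two_eq_zero_or_one j.val with h | h <;> rw [h] <;> simp <;> congr 1 <;>
    · ext; simp [Nat.mod_eq_of_lt (show 1 < N by omega)]

theorem cycle_asAdj_rank (N : ℕ) (hN : 3 ≤ N) :
    (Odd N → (cycleAsAdj N).rank = N - 1) ∧
    (Even N → (cycleAsAdj N).rank = N - 2) := by
  haveI : NeZero N := ⟨by omega⟩
  have hrn := LinearMap.finrank_range_add_finrank_ker (cycleAsAdj N).mulVecLin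
  rw [Module.finrank_fintype_fun_eq_card, Fintype.card_fin] at hrn
  have hrdef : (cycleAsAdj N).rank
      = Module.finrank ℂ (LinearMap.range (cycleAsAdj N).mulVecLin) := rfl
  constructor
  · -- odd case
    intro hodd
    set v : Fin N → ℂ := fun _ => 1 with hv
    have hker : LinearMap.ker (cycleAsAdj N).mulVecLin = ℂ ∙ v := by
      apply le_antisymm
      · intro x hx
        rw [mem_ker_iff hN] at hx
        have hx0 := key_odd hN hodd x hx
        rw [Submodule.mem_span_singleton]
        exact ⟨x ⟨0, by omega⟩, by funext j; rw [hx0 j]; simp [hv]⟩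
      · rw [Submodule.span_singleton_le_iff_mem, mem_ker_iff hN]
        intro j; rfl
    have hvne : v ≠ 0 := by
      intro h
      have := congrFun h ⟨0, by omega⟩
      simp [hv] at this
    rw [hker, finrank_span_singleton hvne] at hrn
    omega
  · -- even case
    intro heven
    obtain ⟨K, hK⟩ := heven
    have hNe : 2 ∣ N := ⟨K, by omega⟩
    set v0 : Fin N → ℂ := fun j => if (j : ℕ) % 2 = 0 then 1 else 0 with hv0
    set v1 : Fin N → ℂ := fun j => if (j : ℕ) % 2 = 0 then 0 else 1 with hv1
    have hval2 : ((2 : Fin N) : ℕ) = 2 := by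
      rw [show (2 : Fin N) = 1 + 1 by norm_num, Fin.val_add, Fin.val_one']
      rw [Nat.mod_eq_of_lt (show 1 < N by omega)]
      exact Nat.mod_eq_of_lt (by omega)
    have hparity : ∀ j : Fin N, ((j + 2 : Fin N) : ℕ) % 2 = (j : ℕ) % 2 := by
      intro j
      rw [Fin.val_add, hval2, Nat.mod_mod_of_dvd _ hNe]
      omega
    have hmem0 : v0 ∈ LinearMap.ker (cycleAsAdj N).mulVecLin := by
      rw [mem_ker_iff hN]; intro j; simp only [hv0, hparity j]
    have hmem1 : v1 ∈ LinearMap.ker (cycleAsAdj N).mulVecLin := by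
      rw [mem_ker_iff hN]; intro j; simp only [hv1, hparity j]
    have hker : LinearMap.ker (cycleAsAdj N).mulVecLin = Submodule.span ℂ {v0, v1} := by
      apply le_antisymm
      · intro x hx
        rw [mem_ker_iff hN] at hx
        have hx0 := key_even hN x hx
        rw [Submodule.mem_span_pair]
        refine ⟨x ⟨0, by omega⟩, x ⟨1, by omega⟩, ?_⟩
        funext j
        have := hx0 j
        rcases Nat.mod_two_eq_zero_or_one j.val with h | h <;>
          simp [hv0, hv1, h] at this ⊢ <;> rw [this]
      · rw [Submodule.span_le]
        rintro y (rfl | rfl)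
        · exact hmem0
        · exact hmem1
    have hli : LinearIndependent ℂ ![v0, v1] := by
      rw [LinearIndependent.pair_iff]
      intro s t hst
      have h0 := congrFun hst ⟨0, by omega⟩
      have h1 := congrFun hst ⟨1, by omega⟩
      simp [hv0, hv1] at h0 h1
      exact ⟨h0, h1⟩
    have hspan : Submodule.span ℂ (Set.range ![v0, v1]) = Submodule.span ℂ {v0, v1} := by
      congr 1
      rw [show Set.range ![v0, v1] = {v0, v1} by
        ext y; simp [Fin.exists_fin_two, or_comm]]
    have hfr : Module.finrank ℂ (LinearMap.ker (cycleAsAdj N).mulVecLin) = 2 := by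
      rw [hker, ← hspan, finrank_span_eq_card hli, Fintype.card_fin]
    rw [hfr] at hrn
    omega
end
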